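/- arXiv:2511.17105 — 13 statements merged into one kernel-verified Lean document; each statement's English description precedes it below -/
import Mathlib

section
/- Let S be a finite set of jobs, each job j having success probability π_j ∈ [0,1) and reward r_j ≥ 0. If σ is an ordering of the elements of S that lists them in non-increasing order of the Z-index Z_j = π_j r_j/(1−π_j), then for every ordering τ of the elements of S one has R(S,τ) ≤ R(S,σ); that is, sequencing by non-increasing Z-index maximizes the expected reward. -/
/-- Expected reward of processing the jobs of `Fin m` in the order given by the
permutation `σ`: `R(S,σ) = Σ_k r_{σ(k)} · ∏_{i ≤ k} π_{σ(i)}`. -/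
def expReward {m : ℕ} (pr r : Fin m → ℝ) (σ : Equiv.Perm (Fin m)) : ℝ :=
  ∑ k : Fin m, r (σ k) * ∏ i ∈ Finset.Iic k, pr (σ i)

section Aux

variable {m : ℕ}

/-- Decompose a sum over `univ` by pulling out two distinct elements. -/
lemma zr_sum_split {M : Type*} [AddCommMonoid M] (k k1 : Fin m) (hne : k ≠ k1)
    (f : Fin m → M) :
    ∑ i, f i = (∑ i ∈ (Finset.univ.erase k1).erase k, f i) + f k + f k1 := by
  rw [Finset.sum_erase_add _ _ (Finset.mem_erase.mpr ⟨hne, Finset.mem_univ k⟩),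
    Finset.sum_erase_add _ _ (Finset.mem_univ k1)]

lemma zr_Iic_eq (k k1 : Fin m) (hk : (k1 : ℕ) = (k : ℕ) + 1) :
    Finset.Iic k1 = insert k1 (Finset.Iic k) := by
  rw [← Finset.Iio_insert]
  congr 1
  ext i
  simp only [Finset.mem_Iio, Finset.mem_Iic, Fin.lt_iff_val_lt_val, Fin.le_iff_val_le_val, hk]
  omega

/-- The adjacent-swap inequality: if `Z(τ k) ≤ Z(τ (k+1))`, then swapping positions
`k` and `k+1` does not decrease the expected reward. -/
lemma zr_swap_le (pr r : Fin m → ℝ)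
    (hpr : ∀ j, 0 ≤ pr j ∧ pr j < 1) (hr : ∀ j, 0 ≤ r j)
    (τ : Equiv.Perm (Fin m)) (k k1 : Fin m) (hk : (k1 : ℕ) = (k : ℕ) + 1)
    (hZ : pr (τ k) * r (τ k) / (1 - pr (τ k)) ≤
      pr (τ k1) * r (τ k1) / (1 - pr (τ k1))) :
    expReward pr r τ ≤ expReward pr r (τ * Equiv.swap k k1) := by
  classical
  have hkk1 : k < k1 := by rw [Fin.lt_iff_val_lt_val]; omega
  have hne : k ≠ k1 := ne_of_lt hkk1
  set τ' := τ * Equiv.swap k k1 with hτ'def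
  have hτ'k : τ' k = τ k1 := by
    simp [hτ'def, Equiv.Perm.mul_apply, Equiv.swap_apply_left]
  have hτ'k1 : τ' k1 = τ k := by
    simp [hτ'def, Equiv.Perm.mul_apply, Equiv.swap_apply_right]
  have hτ'other : ∀ i, i ≠ k → i ≠ k1 → τ' i = τ i := by
    intro i h h'
    simp [hτ'def, Equiv.Perm.mul_apply, Equiv.swap_apply_of_ne_of_ne h h']
  set f : Equiv.Perm (Fin m) → Fin m → ℝ :=
    fun ρ j => r (ρ j) * ∏ i ∈ Finset.Iic j, pr (ρ i) with hf
  have hsplit : ∀ ρ : Equiv.Perm (Fin m), expReward pr r ρ =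
      (∑ i ∈ (Finset.univ.erase k1).erase k, f ρ i) + f ρ k + f ρ k1 := by
    intro ρ
    exact zr_sum_split k k1 hne (f ρ)
  rw [hsplit τ, hsplit τ']
  have hoff : ∀ j ∈ (Finset.univ.erase k1).erase k, f τ' j = f τ j := by
    intro j hj
    have hjk : j ≠ k := (Finset.mem_erase.mp hj).1
    have hjk1 : j ≠ k1 := (Finset.mem_erase.mp (Finset.mem_erase.mp hj).2).1
    rcases lt_or_gt_of_ne hjk with hlt | hgt
    · -- j < k : all indices in Iic j are untouched by the swap
      have : ∀ i ∈ Finset.Iic j, τ' i = τ i := by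
        intro i hi
        have hij : i ≤ j := Finset.mem_Iic.mp hi
        have h1 : i ≠ k := ne_of_lt (lt_of_le_of_lt hij hlt)
        have h2 : i ≠ k1 := ne_of_lt (lt_of_le_of_lt hij (hlt.trans hkk1))
        exact hτ'other i h1 h2
      simp only [hf]
      rw [hτ'other j hjk hjk1]
      congr 1
      exact Finset.prod_congr rfl (fun i hi => by rw [this i hi])
    · -- k < j, hence k1 ≤ j, hence k1 < j (since j ≠ k1): both k, k1 ∈ Iic j
      have hk1j : k1 ≤ j := by
        have h1 : (k : ℕ) < (j : ℕ) := hgt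
        rw [Fin.le_iff_val_le_val]
        omega
      simp only [hf]
      rw [hτ'other j hjk hjk1]
      congr 1
      have : ∀ i ∈ Finset.Iic j, τ' i = τ (Equiv.swap k k1 i) := fun i _ => rfl
      rw [Finset.prod_congr rfl (fun i hi => by rw [this i hi])]
      refine Equiv.Perm.prod_comp (Equiv.swap k k1) (Finset.Iic j) (fun i => pr (τ i)) ?_
      intro a ha
      have := Equiv.swap_apply_ne_self_iff.mp ha
      rcases this.2 with h | h <;> subst h <;> simp [Finset.mem_Iic]
      · exact le_of_lt (lt_of_lt_of_le hkk1 hk1j)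
      · exact hk1j
  rw [Finset.sum_congr rfl hoff]
  have hP : (0:ℝ) ≤ ∏ i ∈ Finset.Iio k, pr (τ i) :=
    Finset.prod_nonneg fun i _ => (hpr (τ i)).1
  set P := ∏ i ∈ Finset.Iio k, pr (τ i) with hPdef
  have hPk : ∏ i ∈ Finset.Iic k, pr (τ i) = pr (τ k) * P := by
    rw [← Finset.Iio_insert, Finset.prod_insert (by simp)]
  have hPk' : ∏ i ∈ Finset.Iic k, pr (τ' i) = pr (τ k1) * P := by
    rw [← Finset.Iio_insert, Finset.prod_insert (by simp), hτ'k]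
    congr 1
    refine Finset.prod_congr rfl fun i hi => ?_
    have hik : i < k := Finset.mem_Iio.mp hi
    rw [hτ'other i (ne_of_lt hik) (ne_of_lt (hik.trans hkk1))]
  have hnotmem : k1 ∉ Finset.Iic k := fun hle => by
    have := Fin.le_iff_val_le_val.mp (Finset.mem_Iic.mp hle); omega
  have hPk1 : ∏ i ∈ Finset.Iic k1, pr (τ i) = pr (τ k1) * (pr (τ k) * P) := by
    rw [zr_Iic_eq k k1 hk, Finset.prod_insert hnotmem, hPk]
  have hPk1' : ∏ i ∈ Finset.Iic k1, pr (τ' i) = pr (τ k) * (pr (τ k1) * P) := by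
    rw [zr_Iic_eq k k1 hk, Finset.prod_insert hnotmem, hPk', hτ'k1]
  simp only [hf, hτ'k, hτ'k1, hPk, hPk', hPk1, hPk1']
  set a := pr (τ k); set b := pr (τ k1); set A := r (τ k); set B := r (τ k1)
  have h1a : 0 < 1 - a := by have := (hpr (τ k)).2; linarith
  have h1b : 0 < 1 - b := by have := (hpr (τ k1)).2; linarith
  have hZ' : a * A * (1 - b) ≤ b * B * (1 - a) := (div_le_div_iff₀ h1a h1b).mp hZ
  have key := mul_le_mul_of_nonneg_left hZ' hP
  nlinarith [key]

/-- The natural-number potential used for the termination argument. -/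
def zrV (τ : Equiv.Perm (Fin m)) : ℕ := ∑ i : Fin m, (m - (i : ℕ)) * ((τ i : ℕ))

lemma zr_V_lt (τ : Equiv.Perm (Fin m)) (k k1 : Fin m) (hk : (k1 : ℕ) = (k : ℕ) + 1)
    (hdesc : τ k1 < τ k) :
    zrV (τ * Equiv.swap k k1) < zrV τ := by
  classical
  have hkk1 : k < k1 := by rw [Fin.lt_iff_val_lt_val]; omega
  have hne : k ≠ k1 := ne_of_lt hkk1
  set τ' := τ * Equiv.swap k k1 with hτ'def
  have hτ'k : τ' k = τ k1 := by
    simp [hτ'def, Equiv.Perm.mul_apply, Equiv.swap_apply_left]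
  have hτ'k1 : τ' k1 = τ k := by
    simp [hτ'def, Equiv.Perm.mul_apply, Equiv.swap_apply_right]
  have hτ'other : ∀ i, i ≠ k → i ≠ k1 → τ' i = τ i := by
    intro i h h'
    simp [hτ'def, Equiv.Perm.mul_apply, Equiv.swap_apply_of_ne_of_ne h h']
  set g : Equiv.Perm (Fin m) → Fin m → ℕ := fun ρ i => (m - (i : ℕ)) * ((ρ i : ℕ)) with hg
  have hsplit : ∀ ρ : Equiv.Perm (Fin m), zrV ρ =
      (∑ i ∈ (Finset.univ.erase k1).erase k, g ρ i) + g ρ k + g ρ k1 :=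
    fun ρ => zr_sum_split k k1 hne (g ρ)
  rw [hsplit τ, hsplit τ']
  have hoff : ∀ j ∈ (Finset.univ.erase k1).erase k, g τ' j = g τ j := by
    intro j hj
    have hjk : j ≠ k := (Finset.mem_erase.mp hj).1
    have hjk1 : j ≠ k1 := (Finset.mem_erase.mp (Finset.mem_erase.mp hj).2).1
    simp only [hg]
    rw [hτ'other j hjk hjk1]
  rw [Finset.sum_congr rfl hoff]
  have hdesc' : ((τ k1 : ℕ)) < ((τ k : ℕ)) := hdesc
  have hk1m : (k1 : ℕ) < m := k1.isLt
  simp only [hg, hτ'k, hτ'k1]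
  have key : (m - (k : ℕ)) * ((τ k1 : ℕ)) + (m - (k1 : ℕ)) * ((τ k : ℕ)) <
      (m - (k : ℕ)) * ((τ k : ℕ)) + (m - (k1 : ℕ)) * ((τ k1 : ℕ)) := by
    have hw : m - (k : ℕ) = (m - (k1 : ℕ)) + 1 := by omega
    rw [hw]
    set w := m - (k1 : ℕ)
    set x := ((τ k : ℕ)); set y := ((τ k1 : ℕ))
    calc (w + 1) * y + w * x = (w * y + w * x) + y := by ring
    _ < (w * y + w * x) + x := by omega
    _ = (w + 1) * x + w * y := by ring
  omega

/-- If a permutation of `Fin m` is not the identity, it has an adjacent descent. -/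
lemma zr_exists_descent (τ : Equiv.Perm (Fin m)) (h : τ ≠ 1) :
    ∃ k k1 : Fin m, (k1 : ℕ) = (k : ℕ) + 1 ∧ τ k1 < τ k := by
  by_contra hc
  push_neg at hc
  apply h
  have step : ∀ k k1 : Fin m, (k1 : ℕ) = (k : ℕ) + 1 → τ k < τ k1 := by
    intro k k1 hk
    have hne : k ≠ k1 := by
      intro he; rw [he] at hk; omega
    have hle : τ k ≤ τ k1 := hc k k1 hk
    exact lt_of_le_of_ne hle (fun he => hne (τ.injective he))
  have aux : ∀ d : ℕ, ∀ i j : Fin m, (j : ℕ) = (i : ℕ) + (d + 1) → τ i < τ j := by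
    intro d
    induction d with
    | zero => intro i j hij; exact step i j hij
    | succ d ih =>
      intro i j hij
      have hm : (i : ℕ) + (d + 1) < m := by have := j.isLt; omega
      set j' : Fin m := ⟨(i : ℕ) + (d + 1), hm⟩
      exact (ih i j' rfl).trans (step j' j (by simp [j']; omega))
  have hmono : StrictMono τ := by
    intro i j hij
    rw [Fin.lt_iff_val_lt_val] at hij
    exact aux ((j : ℕ) - (i : ℕ) - 1) i j (by omega)
  have hrange : Set.range τ = Set.range (id : Fin m → Fin m) := by
    rw [Set.range_id]
    exact Set.range_eq_univ.mpr τ.surjective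
  haveI : WellFoundedLT (Fin m) := inferInstance
  have : (τ : Fin m → Fin m) = id := (hmono.range_inj strictMono_id).mp hrange
  exact Equiv.ext fun x => congrFun this x

/-- Optimality of the identity ordering when the `Z`-indices are already sorted
in non-increasing order. -/
lemma zr_id_optimal (pr r : Fin m → ℝ)
    (hpr : ∀ j, 0 ≤ pr j ∧ pr j < 1) (hr : ∀ j, 0 ≤ r j)
    (hZ : ∀ k l : Fin m, k ≤ l →
      pr l * r l / (1 - pr l) ≤ pr k * r k / (1 - pr k)) :
    ∀ τ : Equiv.Perm (Fin m), expReward pr r τ ≤ expReward pr r 1 := by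
  suffices H : ∀ n : ℕ, ∀ τ : Equiv.Perm (Fin m), zrV τ ≤ n →
      expReward pr r τ ≤ expReward pr r 1 by
    intro τ; exact H (zrV τ) τ le_rfl
  intro n
  induction n using Nat.strong_induction_on with
  | _ n ih =>
    intro τ hτn
    by_cases h1 : τ = 1
    · subst h1; exact le_rfl
    · obtain ⟨k, k1, hk, hdesc⟩ := zr_exists_descent τ h1
      have hZkl : pr (τ k) * r (τ k) / (1 - pr (τ k)) ≤
          pr (τ k1) * r (τ k1) / (1 - pr (τ k1)) := hZ (τ k1) (τ k) (le_of_lt hdesc)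
      have h2 := zr_swap_le pr r hpr hr τ k k1 hk hZkl
      have h3 := zr_V_lt τ k k1 hk hdesc
      have h4 : zrV (τ * Equiv.swap k k1) < n := lt_of_lt_of_le h3 hτn
      exact h2.trans (ih (zrV (τ * Equiv.swap k k1)) h4 _ le_rfl)

end Aux

/-- Sequencing the jobs in non-increasing order of the Z-index
`Z_j = π_j r_j / (1 - π_j)` maximizes the expected reward. -/
theorem zrule_optimal {m : ℕ} (pr r : Fin m → ℝ)
    (hpr : ∀ j, 0 ≤ pr j ∧ pr j < 1) (hr : ∀ j, 0 ≤ r j)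
    (σ : Equiv.Perm (Fin m))
    (hσ : ∀ k l : Fin m, k ≤ l →
      pr (σ l) * r (σ l) / (1 - pr (σ l)) ≤ pr (σ k) * r (σ k) / (1 - pr (σ k)))
    (τ : Equiv.Perm (Fin m)) :
    expReward pr r τ ≤ expReward pr r σ := by
  have hcomp : ∀ ρ : Equiv.Perm (Fin m),
      expReward (pr ∘ σ) (r ∘ σ) ρ = expReward pr r (σ * ρ) := by
    intro ρ
    simp [expReward, Equiv.Perm.mul_apply, Function.comp]
  have h := zr_id_optimal (pr ∘ σ) (r ∘ σ) (fun j => hpr (σ j)) (fun j => hr (σ j))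
    (fun k l hkl => hσ k l hkl) (σ⁻¹ * τ)
  rw [hcomp, hcomp] at h
  simpa using h
end

section
/- Suppose all jobs have the same cost, i.e., c_j = c for all j = 1,…,n. Then for every greedy run S_0 = ∅, S_1, …, S_m, the terminal set S_m is optimal: z(S_m) = max_{S ⊆ {1,…,n}} z(S). -/
/-- Expected reward of a subset `S`, sequencing its jobs in increasing index order:
`R(S) = Σ_{j∈S} r_j ∏_{i∈S, i≤j} π_i`. -/
def Rexp {n : ℕ} (pr r : Fin n → ℝ) (S : Finset (Fin n)) : ℝ :=
  ∑ j ∈ S, r j * ∏ i ∈ S.filter (fun i => i ≤ j), pr i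

/-- Total cost of a subset `S`. -/
def cst {n : ℕ} (c : Fin n → ℝ) (S : Finset (Fin n)) : ℝ := ∑ j ∈ S, c j

/-- Expected net profit `z(S) = R(S) − c(S)`. -/
def netz {n : ℕ} (pr r c : Fin n → ℝ) (S : Finset (Fin n)) : ℝ :=
  Rexp pr r S - cst c S

open Finset

namespace UJSSPaux

variable {n : ℕ}

noncomputable def Zf (pr r : Fin n → ℝ) (j : Fin n) : ℝ := pr j * r j / (1 - pr j)

noncomputable def Zv (pr r : Fin n → ℝ) (k : ℕ) : ℝ :=
  if h : k < n then Zf pr r ⟨k, h⟩ else 0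

noncomputable def al (pr r : Fin n → ℝ) (l : ℕ) : ℝ := Zv pr r l - Zv pr r (l + 1)

def Qp (pr : Fin n → ℝ) (l : ℕ) (S : Finset (Fin n)) : ℝ :=
  ∏ j ∈ S.filter (fun j => j.val ≤ l), pr j

lemma Zf_nonneg (pr r : Fin n → ℝ) (hpr : ∀ j, 0 ≤ pr j ∧ pr j < 1) (hr : ∀ j, 0 ≤ r j)
    (j : Fin n) : 0 ≤ Zf pr r j :=
  div_nonneg (mul_nonneg (hpr j).1 (hr j)) (by have := (hpr j).2; linarith)

lemma al_nonneg (pr r : Fin n → ℝ) (hpr : ∀ j, 0 ≤ pr j ∧ pr j < 1) (hr : ∀ j, 0 ≤ r j)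
    (hZ : ∀ i j : Fin n, i ≤ j →
      pr j * r j / (1 - pr j) ≤ pr i * r i / (1 - pr i))
    {l : ℕ} (hl : l < n) : 0 ≤ al pr r l := by
  rw [al, sub_nonneg]
  simp only [Zv]
  by_cases h2 : l + 1 < n
  · rw [dif_pos h2, dif_pos hl]
    exact hZ ⟨l, hl⟩ ⟨l + 1, h2⟩ (by simp [Fin.mk_le_mk])
  · rw [dif_neg h2, dif_pos hl]
    exact Zf_nonneg pr r hpr hr _

lemma one_sub_prod (pr : Fin n → ℝ) (F : Finset (Fin n)) :
    1 - ∏ j ∈ F, pr j = ∑ j ∈ F, (1 - pr j) * ∏ i ∈ F.filter (fun i => i < j), pr i := by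
  induction F using Finset.induction_on_max with
  | empty => simp
  | insert a s hmax ih =>
    have ha : a ∉ s := fun h => lt_irrefl a (hmax a h)
    rw [Finset.prod_insert ha, Finset.sum_insert ha]
    have h1 : (insert a s).filter (fun i => i < a) = s := by
      ext i
      simp only [mem_filter, mem_insert]
      constructor
      · rintro ⟨h | h, hlt⟩
        · exact absurd hlt (by simp [h])
        · exact h
      · intro h; exact ⟨Or.inr h, hmax i h⟩
    have h2 : ∑ j ∈ s, (1 - pr j) * ∏ i ∈ (insert a s).filter (fun i => i < j), pr i
        = ∑ j ∈ s, (1 - pr j) * ∏ i ∈ s.filter (fun i => i < j), pr i := by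
      refine Finset.sum_congr rfl fun j hj => ?_
      rw [Finset.filter_insert, if_neg (not_lt.2 (le_of_lt (hmax j hj)))]
    rw [h1, h2, ← ih]
    ring

lemma sum_al (pr r : Fin n → ℝ) (j : Fin n) :
    ∑ l ∈ Finset.range n, (if j.val ≤ l then al pr r l else 0) = Zf pr r j := by
  rw [← Finset.sum_filter]
  have hfil : (Finset.range n).filter (fun l => j.val ≤ l) = Finset.Ico j.val n := by
    ext l
    simp only [mem_filter, mem_range, Finset.mem_Ico]
    tauto
  rw [hfil, Finset.sum_Ico_eq_sub _ (le_of_lt j.isLt)]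
  simp only [al]
  rw [Finset.sum_range_sub' (Zv pr r), Finset.sum_range_sub' (Zv pr r)]
  have hn : Zv pr r n = 0 := dif_neg (lt_irrefl n)
  have hj : Zv pr r j.val = Zf pr r j := by
    rw [Zv, dif_pos j.isLt]
  rw [hn, hj]
  ring

lemma Rexp_eq_tel (pr r : Fin n → ℝ) (hpr : ∀ j, 0 ≤ pr j ∧ pr j < 1)
    (S : Finset (Fin n)) :
    Rexp pr r S = ∑ l ∈ Finset.range n, al pr r l * (1 - Qp pr l S) := by
  have hQ : ∀ l : ℕ, 1 - Qp pr l S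
      = ∑ j ∈ S, (if j.val ≤ l then
          (1 - pr j) * ∏ i ∈ S.filter (fun i => i < j), pr i else 0) := by
    intro l
    rw [Qp, one_sub_prod, ← Finset.sum_filter]
    refine Finset.sum_congr rfl fun j hj => ?_
    have hjl : j.val ≤ l := (Finset.mem_filter.mp hj).2
    congr 1
    refine Finset.prod_congr ?_ (fun _ _ => rfl)
    ext i
    simp only [mem_filter]
    constructor
    · rintro ⟨⟨hiS, _⟩, hlt⟩; exact ⟨hiS, hlt⟩
    · rintro ⟨hiS, hlt⟩
      have hvl : i.val < j.val := hlt
      exact ⟨⟨hiS, le_trans (le_of_lt hvl) hjl⟩, hlt⟩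
  calc Rexp pr r S
      = ∑ j ∈ S, Zf pr r j * ((1 - pr j) * ∏ i ∈ S.filter (fun i => i < j), pr i) := by
        rw [Rexp]
        refine Finset.sum_congr rfl fun j hj => ?_
        have hfil : S.filter (fun i => i ≤ j) = insert j (S.filter (fun i => i < j)) := by
          ext i
          simp only [mem_filter, mem_insert]
          constructor
          · rintro ⟨hiS, hle⟩
            rcases eq_or_lt_of_le hle with h | h
            · exact Or.inl h
            · exact Or.inr ⟨hiS, h⟩
          · rintro (h | ⟨hiS, hlt⟩)
            · subst h; exact ⟨hj, le_refl _⟩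
            · exact ⟨hiS, le_of_lt hlt⟩
        rw [hfil, Finset.prod_insert (by simp)]
        have h1 : (1 : ℝ) - pr j ≠ 0 := by
          have := (hpr j).2; intro h; linarith [sub_eq_zero.mp h]
        rw [Zf]
        field_simp
    _ = ∑ j ∈ S, ∑ l ∈ Finset.range n,
          (if j.val ≤ l then al pr r l * ((1 - pr j) * ∏ i ∈ S.filter (fun i => i < j), pr i) else 0) := by
        refine Finset.sum_congr rfl fun j hj => ?_
        rw [← sum_al pr r j, Finset.sum_mul]
        refine Finset.sum_congr rfl fun l hl => ?_
        split <;> ring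
    _ = ∑ l ∈ Finset.range n, ∑ j ∈ S,
          (if j.val ≤ l then al pr r l * ((1 - pr j) * ∏ i ∈ S.filter (fun i => i < j), pr i) else 0) :=
        Finset.sum_comm
    _ = ∑ l ∈ Finset.range n, al pr r l * (1 - Qp pr l S) := by
        refine Finset.sum_congr rfl fun l hl => ?_
        rw [hQ l, Finset.mul_sum]
        refine Finset.sum_congr rfl fun j hj => ?_
        split <;> ring

lemma Qp_nonneg (pr : Fin n → ℝ) (hpr : ∀ j, 0 ≤ pr j ∧ pr j < 1) (l : ℕ)
    (S : Finset (Fin n)) : 0 ≤ Qp pr l S :=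
  Finset.prod_nonneg fun j _ => (hpr j).1

lemma prod_pr_anti (pr : Fin n → ℝ) (hpr : ∀ j, 0 ≤ pr j ∧ pr j < 1)
    {F G : Finset (Fin n)} (h : F ⊆ G) : ∏ j ∈ G, pr j ≤ ∏ j ∈ F, pr j := by
  rw [← Finset.prod_sdiff h]
  exact mul_le_of_le_one_left (Finset.prod_nonneg fun j _ => (hpr j).1)
    (Finset.prod_le_one (fun j _ => (hpr j).1) (fun j _ => le_of_lt (hpr j).2))

lemma Qp_anti (pr : Fin n → ℝ) (hpr : ∀ j, 0 ≤ pr j ∧ pr j < 1) (l : ℕ)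
    {F G : Finset (Fin n)} (h : F ⊆ G) : Qp pr l G ≤ Qp pr l F :=
  prod_pr_anti pr hpr (Finset.filter_subset_filter _ h)

lemma Qp_insert_le (pr : Fin n → ℝ) {l : ℕ} {t : Fin n} (hl : t.val ≤ l)
    {Sx : Finset (Fin n)} (ht : t ∉ Sx) :
    Qp pr l (insert t Sx) = pr t * Qp pr l Sx := by
  rw [Qp, Qp, Finset.filter_insert, if_pos hl,
    Finset.prod_insert (fun hmem => ht (Finset.mem_filter.mp hmem).1)]

lemma Qp_insert_gt (pr : Fin n → ℝ) {l : ℕ} {t : Fin n} (hl : l < t.val)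
    (Sx : Finset (Fin n)) : Qp pr l (insert t Sx) = Qp pr l Sx := by
  rw [Qp, Qp, Finset.filter_insert, if_neg (by omega)]

lemma Qp_mem (pr : Fin n → ℝ) {l : ℕ} {t : Fin n} (hl : t.val ≤ l)
    {T : Finset (Fin n)} (ht : t ∈ T) :
    Qp pr l T = pr t * Qp pr l (T.erase t) := by
  conv_lhs => rw [← Finset.insert_erase ht]
  exact Qp_insert_le pr hl (Finset.notMem_erase t T)

lemma Qp_erase_gt (pr : Fin n → ℝ) {l : ℕ} {t : Fin n} (hl : l < t.val)
    (T : Finset (Fin n)) : Qp pr l (T.erase t) = Qp pr l T := by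
  rw [Qp, Qp]
  congr 1
  ext i
  simp only [mem_filter, Finset.mem_erase]
  constructor
  · rintro ⟨⟨_, hiT⟩, hil⟩; exact ⟨hiT, hil⟩
  · rintro ⟨hiT, hil⟩
    refine ⟨⟨?_, hiT⟩, hil⟩
    intro h; subst h; omega

/-- Key exchange inequality.  For `t ∈ T`, `t ∉ S`, with every element of `T`
below `t` already in `S`:
`R(T) + π_t R(S) ≤ R(S ∪ {t}) + π_t R(T \ {t})`. -/
lemma exchange (pr r : Fin n → ℝ) (hpr : ∀ j, 0 ≤ pr j ∧ pr j < 1) (hr : ∀ j, 0 ≤ r j)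
    (hZ : ∀ i j : Fin n, i ≤ j →
      pr j * r j / (1 - pr j) ≤ pr i * r i / (1 - pr i))
    (Sx T : Finset (Fin n)) (t : Fin n) (htT : t ∈ T) (htS : t ∉ Sx)
    (hmin : ∀ j ∈ T, j < t → j ∈ Sx) :
    Rexp pr r T + pr t * Rexp pr r Sx
      ≤ Rexp pr r (insert t Sx) + pr t * Rexp pr r (T.erase t) := by
  rw [Rexp_eq_tel pr r hpr T, Rexp_eq_tel pr r hpr Sx,
    Rexp_eq_tel pr r hpr (insert t Sx), Rexp_eq_tel pr r hpr (T.erase t),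
    Finset.mul_sum, Finset.mul_sum, ← Finset.sum_add_distrib, ← Finset.sum_add_distrib]
  refine Finset.sum_le_sum fun l hl => ?_
  have hln : l < n := Finset.mem_range.mp hl
  have hal := al_nonneg pr r hpr hr hZ hln
  by_cases hlt : t.val ≤ l
  · rw [Qp_insert_le pr hlt htS, Qp_mem pr hlt htT]
    ring_nf
    exact le_refl _
  · push_neg at hlt
    rw [Qp_insert_gt pr hlt, Qp_erase_gt pr hlt]
    have hsub : T.filter (fun j => j.val ≤ l) ⊆ Sx.filter (fun j => j.val ≤ l) := by
      intro i hi
      obtain ⟨hiT, hil⟩ := Finset.mem_filter.mp hi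
      have : i < t := by
        rw [Fin.lt_def]; omega
      exact Finset.mem_filter.mpr ⟨hmin i hiT this, hil⟩
    have hQle : Qp pr l Sx ≤ Qp pr l T := prod_pr_anti pr hpr hsub
    have h0t := (hpr t).1
    have h1t := (hpr t).2
    nlinarith [mul_nonneg (mul_nonneg hal (by linarith : (0:ℝ) ≤ 1 - pr t))
      (sub_nonneg.mpr hQle)]

/-- Submodularity of the marginal gain. -/
lemma gain_mono (pr r : Fin n → ℝ) (hpr : ∀ j, 0 ≤ pr j ∧ pr j < 1) (hr : ∀ j, 0 ≤ r j)
    (hZ : ∀ i j : Fin n, i ≤ j →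
      pr j * r j / (1 - pr j) ≤ pr i * r i / (1 - pr i))
    (Sx X : Finset (Fin n)) (hSX : Sx ⊆ X) (j : Fin n) (hj : j ∉ X) :
    Rexp pr r (insert j X) - Rexp pr r X ≤ Rexp pr r (insert j Sx) - Rexp pr r Sx := by
  have hjS : j ∉ Sx := fun h => hj (hSX h)
  rw [Rexp_eq_tel pr r hpr (insert j X), Rexp_eq_tel pr r hpr X,
    Rexp_eq_tel pr r hpr (insert j Sx), Rexp_eq_tel pr r hpr Sx,
    ← Finset.sum_sub_distrib, ← Finset.sum_sub_distrib]
  refine Finset.sum_le_sum fun l hl => ?_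
  have hln : l < n := Finset.mem_range.mp hl
  have hal := al_nonneg pr r hpr hr hZ hln
  by_cases hlt : j.val ≤ l
  · rw [Qp_insert_le pr hlt hj, Qp_insert_le pr hlt hjS]
    have hQle : Qp pr l X ≤ Qp pr l Sx := Qp_anti pr hpr l hSX
    have h0 := (hpr j).1
    have h1 := (hpr j).2
    nlinarith [mul_nonneg (mul_nonneg hal (by linarith : (0:ℝ) ≤ 1 - pr j))
      (sub_nonneg.mpr hQle)]
  · push_neg at hlt
    rw [Qp_insert_gt pr hlt, Qp_insert_gt pr hlt]
    simp

end UJSSPaux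

/-- With identical costs (`c_j = c` for all `j`), every greedy run terminates in an
optimal set: `z(S_m) = max_{S ⊆ {1,…,n}} z(S)`. -/
theorem greedy_optimal_equal_costs (n : ℕ) (pr r c : Fin n → ℝ)
    (hpr : ∀ j, 0 ≤ pr j ∧ pr j < 1) (hr : ∀ j, 0 ≤ r j) (hc0 : ∀ j, 0 ≤ c j)
    (hZ : ∀ i j : Fin n, i ≤ j →
      pr j * r j / (1 - pr j) ≤ pr i * r i / (1 - pr i))
    (cconst : ℝ) (hcc : ∀ j, c j = cconst)
    (m : ℕ) (S : ℕ → Finset (Fin n))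
    (h0 : S 0 = ∅)
    (hstep : ∀ i < m, ∃ k ∉ S i, S (i + 1) = insert k (S i) ∧
        netz pr r c (S i) < netz pr r c (insert k (S i)) ∧
        ∀ j ∉ S i, netz pr r c (insert j (S i)) ≤ netz pr r c (insert k (S i)))
    (hterm : ∀ j ∉ S m, netz pr r c (insert j (S m)) ≤ netz pr r c (S m)) :
    netz pr r c (S m) =
      (Finset.univ : Finset (Fin n)).powerset.sup' (Finset.powerset_nonempty _)
        (netz pr r c) := by
  classical
  have hnet : ∀ U : Finset (Fin n), netz pr r c U = Rexp pr r U - cconst * U.card := by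
    intro U
    rw [netz, cst]
    congr 1
    rw [Finset.sum_congr rfl (fun j _ => hcc j), Finset.sum_const, nsmul_eq_mul, mul_comm]
  -- cardinalities along the run
  have hcard : ∀ i, i ≤ m → (S i).card = i := by
    intro i
    induction i with
    | zero => intro _; rw [h0]; rfl
    | succ i ih =>
      intro h
      obtain ⟨k, hk, heq, _, _⟩ := hstep i (by omega)
      rw [heq, Finset.card_insert_of_notMem hk, ih (by omega)]
  -- monotonicity of the value along the run
  have hchainstep : ∀ i, i < m → netz pr r c (S i) ≤ netz pr r c (S (i + 1)) := by
    intro i hi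
    obtain ⟨k, hk, heq, hlt, _⟩ := hstep i hi
    rw [heq]; exact le_of_lt hlt
  have hchain : ∀ i, i ≤ m → netz pr r c (S i) ≤ netz pr r c (S m) := by
    have key : ∀ d i, i + d ≤ m → netz pr r c (S i) ≤ netz pr r c (S (i + d)) := by
      intro d
      induction d with
      | zero => intro i _; exact le_refl _
      | succ d ih =>
        intro i h
        calc netz pr r c (S i) ≤ netz pr r c (S (i + d)) := ih i (by omega)
          _ ≤ netz pr r c (S (i + d + 1)) := hchainstep (i + d) (by omega)
    intro i him
    have := key (m - i) i (by omega)
    rwa [show i + (m - i) = m by omega] at this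
  -- the generic exchange step, packaged
  have hexch : ∀ (V U : Finset (Fin n)) (hcardlt : V.card < U.card),
      Rexp pr r (U.erase ((U \ V).min' (by
        rw [Finset.sdiff_nonempty]
        intro hsub
        exact absurd (Finset.card_le_card hsub) (by omega)))) ≤ Rexp pr r V →
      ∃ t : Fin n, t ∉ V ∧ t ∈ U ∧ Rexp pr r U ≤ Rexp pr r (insert t V) := by
    intro V U hcardlt hRe
    have hne : (U \ V).Nonempty := by
      rw [Finset.sdiff_nonempty]
      intro hsub
      exact absurd (Finset.card_le_card hsub) (by omega)
    set t := (U \ V).min' (by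
        rw [Finset.sdiff_nonempty]
        intro hsub
        exact absurd (Finset.card_le_card hsub) (by omega)) with htdef
    have htU : t ∈ U := (Finset.mem_sdiff.mp (Finset.min'_mem _ hne)).1
    have htV : t ∉ V := (Finset.mem_sdiff.mp (Finset.min'_mem _ hne)).2
    have hmin : ∀ j ∈ U, j < t → j ∈ V := by
      intro j hjU hjt
      by_contra hjV
      have : t ≤ j := Finset.min'_le _ j (Finset.mem_sdiff.mpr ⟨hjU, hjV⟩)
      exact absurd hjt (not_lt.mpr this)
    have hx := UJSSPaux.exchange pr r hpr hr hZ V U t htU htV hmin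
    have h2 : pr t * Rexp pr r (U.erase t) ≤ pr t * Rexp pr r V :=
      mul_le_mul_of_nonneg_left hRe (hpr t).1
    exact ⟨t, htV, htU, by linarith⟩
  -- greedy sets are optimal for their cardinality
  have Pcard : ∀ i, i ≤ m → ∀ U : Finset (Fin n), U.card = i →
      netz pr r c U ≤ netz pr r c (S i) := by
    intro i
    induction i with
    | zero =>
      intro _ U hU
      rw [Finset.card_eq_zero] at hU
      rw [hU, h0]
    | succ i ih =>
      intro him U hU
      have him' : i < m := by omega
      obtain ⟨k, hkS, heq, _, hmax⟩ := hstep i him'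
      have hcardSi : (S i).card = i := hcard i (by omega)
      have hclt : (S i).card < U.card := by omega
      have hne : (U \ S i).Nonempty := by
        rw [Finset.sdiff_nonempty]
        intro hsub
        exact absurd (Finset.card_le_card hsub) (by omega)
      have hRe : Rexp pr r (U.erase ((U \ S i).min' hne)) ≤ Rexp pr r (S i) := by
        have htU : (U \ S i).min' hne ∈ U :=
          (Finset.mem_sdiff.mp (Finset.min'_mem _ hne)).1
        have hUe : (U.erase ((U \ S i).min' hne)).card = i := by
          rw [Finset.card_erase_of_mem htU, hU]; omega
        have hprev := ih (by omega) _ hUe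
        rw [hnet, hnet, hUe, hcardSi] at hprev
        linarith
      obtain ⟨t, htV, htU, hexR⟩ := hexch (S i) U hclt hRe
      have hcins : (insert t (S i)).card = i + 1 := by
        rw [Finset.card_insert_of_notMem htV, hcardSi]
      have h5 : netz pr r c U ≤ netz pr r c (insert t (S i)) := by
        rw [hnet, hnet, hU, hcins]
        linarith
      calc netz pr r c U ≤ netz pr r c (insert t (S i)) := h5
        _ ≤ netz pr r c (insert k (S i)) := hmax t htV
        _ = netz pr r c (S (i + 1)) := by rw [heq]
  have hcardSm : (S m).card = m := hcard m le_rfl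
  -- beyond the terminal set
  have hQd : ∀ d, m + d ≤ n → ∃ V : Finset (Fin n), S m ⊆ V ∧ V.card = m + d ∧
      netz pr r c V ≤ netz pr r c (S m) ∧
      ∀ U : Finset (Fin n), U.card = m + d → netz pr r c U ≤ netz pr r c V := by
    intro d
    induction d with
    | zero =>
      intro _
      exact ⟨S m, subset_rfl, by omega, le_rfl, fun U hU => Pcard m le_rfl U (by omega)⟩
    | succ d ih =>
      intro hle
      obtain ⟨V, hSV, hVcard, hVle, hVopt⟩ := ih (by omega)
      have hVne : (Finset.univ \ V).Nonempty := by
        rw [Finset.sdiff_nonempty]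
        intro hsub
        have := Finset.card_le_card hsub
        rw [Finset.card_univ, Fintype.card_fin] at this
        omega
      obtain ⟨js, hjsW, hjsmax⟩ := Finset.exists_max_image (Finset.univ \ V)
        (fun j => netz pr r c (insert j V)) hVne
      have hjsV : js ∉ V := (Finset.mem_sdiff.mp hjsW).2
      have hjsS : js ∉ S m := fun h => hjsV (hSV h)
      have hcins : (insert js V).card = m + (d + 1) := by
        rw [Finset.card_insert_of_notMem hjsV, hVcard]
        omega
      refine ⟨insert js V, hSV.trans (Finset.subset_insert _ _), hcins, ?_, ?_⟩
      · -- value does not go up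
        have hg := UJSSPaux.gain_mono pr r hpr hr hZ (S m) V hSV js hjsV
        have hterm' := hterm js hjsS
        rw [hnet, hnet] at hterm'
        rw [Finset.card_insert_of_notMem hjsS, hcardSm] at hterm'
        push_cast at hterm'
        have hfin : netz pr r c (insert js V) ≤ netz pr r c V := by
          rw [hnet, hnet, hcins, hVcard]
          push_cast
          linarith
        linarith
      · intro U hU
        have hclt : V.card < U.card := by omega
        have hne : (U \ V).Nonempty := by
          rw [Finset.sdiff_nonempty]
          intro hsub
          exact absurd (Finset.card_le_card hsub) (by omega)
        have hRe : Rexp pr r (U.erase ((U \ V).min' hne)) ≤ Rexp pr r V := by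
          have htU : (U \ V).min' hne ∈ U :=
            (Finset.mem_sdiff.mp (Finset.min'_mem _ hne)).1
          have hUe : (U.erase ((U \ V).min' hne)).card = m + d := by
            rw [Finset.card_erase_of_mem htU, hU]; omega
          have hprev := hVopt _ hUe
          rw [hnet, hnet, hUe, hVcard] at hprev
          linarith
        obtain ⟨t, htV, htU, hexR⟩ := hexch V U hclt hRe
        have hcins2 : (insert t V).card = m + (d + 1) := by
          rw [Finset.card_insert_of_notMem htV, hVcard]
          omega
        have h5 : netz pr r c U ≤ netz pr r c (insert t V) := by
          rw [hnet, hnet, hU, hcins2]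
          linarith
        calc netz pr r c U ≤ netz pr r c (insert t V) := h5
          _ ≤ netz pr r c (insert js V) :=
            hjsmax t (Finset.mem_sdiff.mpr ⟨Finset.mem_univ t, htV⟩)
  -- global upper bound
  have hub : ∀ U : Finset (Fin n), netz pr r c U ≤ netz pr r c (S m) := by
    intro U
    rcases le_or_gt U.card m with h | h
    · exact (Pcard U.card h U rfl).trans (hchain U.card h)
    · have hUn : U.card ≤ n := by simpa using Finset.card_le_univ U
      obtain ⟨V, _, _, hVle, hVopt⟩ := hQd (U.card - m) (by omega)
      exact (hVopt U (by omega)).trans hVle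
  refine le_antisymm ?_ ?_
  · exact Finset.le_sup' (netz pr r c) (Finset.mem_powerset.mpr (Finset.subset_univ _))
  · exact Finset.sup'_le _ _ fun U _ => hub U
end

section
/- Suppose all jobs have the same success probability, i.e., π_j = π ∈ [0,1) for all j = 1,…,n. Then for every greedy run S_0 = ∅, S_1, …, S_m, the terminal set S_m is optimal: z(S_m) = max_{S ⊆ {1,…,n}} z(S). -/
namespace UJSSPaux

variable {n : ℕ}

/-- rank of `i` in `S`: number of elements of `S` that are `≤ i`. -/
def rkk (S : Finset (Fin n)) (i : Fin n) : ℕ := (S.filter (fun x => x ≤ i)).card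

/-- top-`t` partial reward -/
def gg (r : Fin n → ℝ) (t : ℕ) (S : Finset (Fin n)) : ℝ :=
  ∑ i ∈ S, if rkk S i ≤ t then r i else 0

/-- net profit with constant probability -/
def zz (p : ℝ) (r c : Fin n → ℝ) (S : Finset (Fin n)) : ℝ :=
  (∑ j ∈ S, r j * p ^ rkk S j) - ∑ j ∈ S, c j

lemma rkk_mono (S : Finset (Fin n)) {i i' : Fin n} (h : i ≤ i') : rkk S i ≤ rkk S i' := by
  apply Finset.card_le_card
  intro x hx
  simp only [Finset.mem_filter] at hx ⊢
  exact ⟨hx.1, le_trans hx.2 h⟩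

lemma rkk_lt (S : Finset (Fin n)) {i i' : Fin n} (hi' : i' ∈ S) (h : i < i') :
    rkk S i < rkk S i' := by
  apply Finset.card_lt_card
  constructor
  · intro x hx
    simp only [Finset.mem_filter] at hx ⊢
    exact ⟨hx.1, le_trans hx.2 h.le⟩
  · intro hsub
    have : i' ∈ S.filter (fun x => x ≤ i) := hsub (by simp [hi'])
    simp only [Finset.mem_filter] at this
    exact absurd this.2 (not_le.mpr h)

lemma rkk_pos (S : Finset (Fin n)) {j : Fin n} (hj : j ∈ S) : 1 ≤ rkk S j :=
  Finset.card_pos.mpr ⟨j, by simp [rkk, hj]⟩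

lemma rkk_le_card (S : Finset (Fin n)) (i : Fin n) : rkk S i ≤ S.card :=
  Finset.card_le_card (Finset.filter_subset _ _)

lemma rkk_insert {S : Finset (Fin n)} {j : Fin n} (hj : j ∉ S) (i : Fin n) :
    rkk (insert j S) i = rkk S i + (if j ≤ i then 1 else 0) := by
  unfold rkk
  rw [Finset.filter_insert]
  split_ifs with h
  · rw [Finset.card_insert_of_notMem (by simp [hj])]
  · simp

lemma rkk_erase {S : Finset (Fin n)} {j : Fin n} (hj : j ∈ S) (i : Fin n) :
    rkk S i = rkk (S.erase j) i + (if j ≤ i then 1 else 0) := by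
  have h := rkk_insert (S := S.erase j) (j := j) (Finset.notMem_erase _ _) i
  rwa [Finset.insert_erase hj] at h

lemma gdiffA (r : Fin n → ℝ) (t : ℕ) {A : Finset (Fin n)} {j : Fin n} (hj : j ∉ A) :
    gg r t (insert j A) + ∑ i ∈ A.filter (fun i => j < i ∧ rkk A i = t), r i
      = gg r t A + (if rkk A j + 1 ≤ t then r j else 0) := by
  unfold gg
  rw [Finset.sum_insert hj, Finset.sum_filter]
  have hjj : rkk (insert j A) j = rkk A j + 1 := by
    rw [rkk_insert hj]; simp
  rw [hjj]
  have hA : ∀ i ∈ A, (if rkk (insert j A) i ≤ t then r i else 0)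
      + (if j < i ∧ rkk A i = t then r i else 0) = (if rkk A i ≤ t then r i else 0) := by
    intro i hi
    have hne : j ≠ i := fun h => hj (h ▸ hi)
    rw [rkk_insert hj i]
    rcases le_or_gt j i with hle | hlt
    · have hji : j < i := lt_of_le_of_ne hle hne
      simp only [if_pos hle, hji, true_and]
      rcases lt_trichotomy (rkk A i) t with h1 | h1 | h1
      · rw [if_pos (by omega), if_neg (by omega), if_pos (by omega)]; ring
      · rw [if_neg (by omega), if_pos h1, if_pos (by omega)]; ring
      · rw [if_neg (by omega), if_neg (by omega), if_neg (by omega)]; ring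
    · have : ¬ j < i := not_lt.mpr hlt.le
      simp only [if_neg (not_le.mpr hlt), this, false_and, if_false, add_zero]
  rw [add_assoc, ← Finset.sum_add_distrib, Finset.sum_congr rfl hA]
  ring

lemma gdiffT (r : Fin n → ℝ) (t : ℕ) {T : Finset (Fin n)} {j : Fin n} (hj : j ∈ T) :
    gg r t T + ∑ i ∈ T.filter (fun i => j < i ∧ rkk T i = t + 1), r i
      = gg r t (T.erase j) + (if rkk T j ≤ t then r j else 0) := by
  have h := gdiffA r t (A := T.erase j) (j := j) (Finset.notMem_erase _ _)
  rw [Finset.insert_erase hj] at h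
  have hrj : rkk (T.erase j) j + 1 = rkk T j := by
    rw [rkk_erase hj j]; simp
  rw [hrj] at h
  have hfil : (T.erase j).filter (fun i => j < i ∧ rkk (T.erase j) i = t)
      = T.filter (fun i => j < i ∧ rkk T i = t + 1) := by
    ext i
    simp only [Finset.mem_filter, Finset.mem_erase]
    constructor
    · rintro ⟨⟨hne, hiT⟩, hji, hrk⟩
      refine ⟨hiT, hji, ?_⟩
      rw [rkk_erase hj i, if_pos hji.le, hrk]
    · rintro ⟨hiT, hji, hrk⟩
      have hne : i ≠ j := fun h => absurd (h ▸ hji) (lt_irrefl _)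
      refine ⟨⟨hne, hiT⟩, hji, ?_⟩
      have := rkk_erase hj i
      rw [if_pos hji.le, hrk] at this
      omega
  rw [hfil] at h
  exact h

lemma rank_exists {T : Finset (Fin n)} {x : Fin n} {s : ℕ} (h1 : 1 ≤ s)
    (h2 : s ≤ rkk T x) : ∃ i ∈ T, i ≤ x ∧ rkk T i = s := by
  classical
  set W := T.filter (fun i => i ≤ x) with hW
  have hrk_mem : ∀ i ∈ W, rkk T i ∈ Finset.Icc 1 W.card := by
    intro i hi
    simp only [hW, Finset.mem_filter] at hi
    simp only [Finset.mem_Icc]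
    constructor
    · exact Finset.card_pos.mpr ⟨i, by simp [rkk, hi.1]⟩
    · apply Finset.card_le_card
      intro y hy
      simp only [rkk, Finset.mem_filter] at hy
      simp only [hW, Finset.mem_filter]
      exact ⟨hy.1, le_trans hy.2 hi.2⟩
  have hinj : Set.InjOn (rkk T) W := by
    intro a ha b hb hab
    simp only [hW, Finset.coe_filter, Set.mem_setOf_eq] at ha hb
    by_contra hne
    rcases lt_or_gt_of_ne hne with hlt | hgt
    · have := rkk_lt T hb.1 hlt; omega
    · have := rkk_lt T ha.1 hgt; omega
  have himg : W.image (rkk T) = Finset.Icc 1 W.card := by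
    apply Finset.eq_of_subset_of_card_le
    · intro y hy
      simp only [Finset.mem_image] at hy
      obtain ⟨i, hi, rfl⟩ := hy
      exact hrk_mem i hi
    · rw [Nat.card_Icc, Finset.card_image_of_injOn hinj]
      omega
  have hs : s ∈ W.image (rkk T) := by
    rw [himg]
    simp only [Finset.mem_Icc]
    exact ⟨h1, le_trans h2 (le_refl _)⟩
  simp only [Finset.mem_image, hW, Finset.mem_filter] at hs
  obtain ⟨i, ⟨hiT, hix⟩, hrk⟩ := hs
  exact ⟨i, hiT, hix, hrk⟩

lemma sum_ineq (r : Fin n → ℝ) (hr0 : ∀ j, 0 ≤ r j)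
    (hrmono : ∀ i j : Fin n, i ≤ j → r j ≤ r i)
    {A T : Finset (Fin n)} {j : Fin n} (hjA : j ∉ A)
    (hrkj : rkk T j = rkk A j + 1)
    (hP : ∀ x, j ≤ x → rkk A x + 1 ≤ rkk T x) (t : ℕ) :
    ∑ i ∈ A.filter (fun i => j < i ∧ rkk A i = t), r i
      ≤ ∑ i ∈ T.filter (fun i => j < i ∧ rkk T i = t + 1), r i := by
  rcases Finset.eq_empty_or_nonempty (A.filter (fun i => j < i ∧ rkk A i = t)) with he | ⟨i0, hi0⟩
  · rw [he, Finset.sum_empty]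
    exact Finset.sum_nonneg (fun i _ => hr0 i)
  · simp only [Finset.mem_filter] at hi0
    obtain ⟨hi0A, hji0, hrk0⟩ := hi0
    have hsingle : A.filter (fun i => j < i ∧ rkk A i = t) = {i0} := by
      apply Finset.eq_singleton_iff_unique_mem.mpr
      refine ⟨by simp only [Finset.mem_filter]; exact ⟨hi0A, hji0, hrk0⟩, ?_⟩
      intro i hi
      simp only [Finset.mem_filter] at hi
      obtain ⟨hiA, hji, hrk⟩ := hi
      rcases lt_trichotomy i i0 with hlt | heq | hgt
      · have := rkk_lt A hi0A hlt; omega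
      · exact heq
      · have := rkk_lt A hiA hgt; omega
    rw [hsingle, Finset.sum_singleton]
    have hti : rkk A j < t := by
      have : rkk A j < rkk A i0 := rkk_lt A hi0A hji0
      omega
    obtain ⟨i1, hi1T, hi1le, hi1rk⟩ := rank_exists (T := T) (x := i0) (s := t + 1)
      (by omega) (by
        have h := hP i0 hji0.le
        omega)
    have hji1 : j < i1 := by
      by_contra hc
      push_neg at hc
      have : rkk T i1 ≤ rkk T j := rkk_mono T hc
      omega
    calc r i0 ≤ r i1 := hrmono i1 i0 hi1le
    _ ≤ ∑ i ∈ T.filter (fun i => j < i ∧ rkk T i = t + 1), r i := by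
        apply Finset.single_le_sum (f := fun i => r i) (fun i _ => hr0 i)
        simp only [Finset.mem_filter]
        exact ⟨hi1T, hji1, hi1rk⟩

lemma per_t (r : Fin n → ℝ) (hr0 : ∀ j, 0 ≤ r j)
    (hrmono : ∀ i j : Fin n, i ≤ j → r j ≤ r i)
    {A T : Finset (Fin n)} {j : Fin n} (hjA : j ∉ A) (hjT : j ∈ T)
    (hrkj : rkk T j = rkk A j + 1)
    (hP : ∀ x, j ≤ x → rkk A x + 1 ≤ rkk T x) (t : ℕ) :
    gg r t A + gg r t T ≤ gg r t (insert j A) + gg r t (T.erase j) := by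
  have e1 := gdiffA r t hjA
  have e2 := gdiffT r t hjT
  have e3 := sum_ineq r hr0 hrmono hjA hrkj hP t
  rw [← hrkj] at e1
  linarith

lemma scalar_rep {p : ℝ} (hp1 : p < 1) {k : ℕ} (hkn : k ≤ n) :
    p ^ k = (1 - p) * ∑ t ∈ Finset.range n, (if k ≤ t then p ^ t else 0) + p ^ n := by
  have hfil : (Finset.range n).filter (fun t => k ≤ t) = Finset.Ico k n := by
    ext t; simp only [Finset.mem_filter, Finset.mem_range, Finset.mem_Ico]; omega
  rw [← Finset.sum_filter, hfil, geom_sum_Ico (by intro h; rw [h] at hp1; linarith) hkn]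
  have : p - 1 ≠ 0 := by intro h; apply absurd (by linarith : p = 1); intro h'; linarith
  field_simp
  ring

lemma reward_rep {p : ℝ} (hp1 : p < 1) (r : Fin n → ℝ) (S : Finset (Fin n)) :
    ∑ j ∈ S, r j * p ^ rkk S j
      = (1 - p) * ∑ t ∈ Finset.range n, p ^ t * gg r t S + p ^ n * gg r n S := by
  have h1 : (1 - p) * ∑ t ∈ Finset.range n, p ^ t * gg r t S
      = ∑ j ∈ S, ∑ t ∈ Finset.range n,
          ((1 - p) * (if rkk S j ≤ t then p ^ t else 0)) * r j := by
    rw [Finset.mul_sum]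
    rw [Finset.sum_comm (s := S) (t := Finset.range n)]
    apply Finset.sum_congr rfl
    intro t _
    unfold gg
    rw [Finset.mul_sum, Finset.mul_sum]
    apply Finset.sum_congr rfl
    intro i _
    split_ifs <;> ring
  have h2 : p ^ n * gg r n S = ∑ j ∈ S, p ^ n * (if rkk S j ≤ n then r j else 0) := by
    unfold gg; rw [Finset.mul_sum]
  rw [h1, h2, ← Finset.sum_add_distrib]
  apply Finset.sum_congr rfl
  intro j hj
  have hkn : rkk S j ≤ n := le_trans (rkk_le_card S j) (by
    simpa using Finset.card_le_card (Finset.subset_univ S))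
  have hs := scalar_rep (n := n) hp1 hkn
  rw [if_pos hkn]
  calc r j * p ^ rkk S j
      = ((1 - p) * ∑ t ∈ Finset.range n, (if rkk S j ≤ t then p ^ t else 0) + p ^ n) * r j := by
        rw [← hs]; ring
    _ = (∑ t ∈ Finset.range n, ((1 - p) * (if rkk S j ≤ t then p ^ t else 0)) * r j)
        + p ^ n * r j := by
        rw [Finset.mul_sum, add_mul, Finset.sum_mul]

lemma rkk_succ (S : Finset (Fin n)) {y j : Fin n} (h : (y : ℕ) + 1 = (j : ℕ)) :
    rkk S j = rkk S y + (if j ∈ S then 1 else 0) := by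
  unfold rkk
  split_ifs with hj
  · have : S.filter (fun x => x ≤ j) = insert j (S.filter (fun x => x ≤ y)) := by
      ext i
      simp only [Finset.mem_filter, Finset.mem_insert]
      constructor
      · rintro ⟨hiS, hij⟩
        rcases eq_or_lt_of_le hij with heq | hlt
        · exact Or.inl heq
        · exact Or.inr ⟨hiS, by
            have h1 : (i : ℕ) < (j : ℕ) := hlt
            have : (i : ℕ) ≤ (y : ℕ) := by omega
            exact this⟩
      · rintro (rfl | ⟨hiS, hiy⟩)
        · exact ⟨hj, le_refl _⟩
        · exact ⟨hiS, by
            have h1 : (i : ℕ) ≤ (y : ℕ) := hiy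
            have : (i : ℕ) ≤ (j : ℕ) := by omega
            exact this⟩
    rw [this, Finset.card_insert_of_notMem (by
      simp only [Finset.mem_filter, not_and]
      intro _
      intro hjy
      have : (j : ℕ) ≤ (y : ℕ) := hjy
      omega)]
  · have : S.filter (fun x => x ≤ j) = S.filter (fun x => x ≤ y) := by
      ext i
      simp only [Finset.mem_filter]
      constructor
      · rintro ⟨hiS, hij⟩
        refine ⟨hiS, ?_⟩
        have h1 : (i : ℕ) ≤ (j : ℕ) := hij
        have hne : i ≠ j := fun he => hj (he ▸ hiS)
        have : (i : ℕ) ≠ (j : ℕ) := fun he => hne (Fin.ext he)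
        have : (i : ℕ) ≤ (y : ℕ) := by omega
        exact this
      · rintro ⟨hiS, hiy⟩
        refine ⟨hiS, ?_⟩
        have h1 : (i : ℕ) ≤ (y : ℕ) := hiy
        have : (i : ℕ) ≤ (j : ℕ) := by omega
        exact this
    rw [this]
    omega

lemma pivot_exists {A T : Finset (Fin n)} (hcard : A.card < T.card) :
    ∃ j : Fin n, j ∈ T ∧ j ∉ A ∧ rkk T j = rkk A j + 1 ∧
      ∀ x, j ≤ x → rkk A x + 1 ≤ rkk T x := by
  classical
  have hT : T.Nonempty := Finset.card_pos.mp (by omega)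
  obtain ⟨w, hw⟩ := hT
  have huniv : (Finset.univ : Finset (Fin n)).Nonempty := ⟨w, Finset.mem_univ w⟩
  set ytop := Finset.univ.max' huniv with hytop
  have htople : ∀ x : Fin n, x ≤ ytop := fun x => Finset.le_max' _ _ (Finset.mem_univ x)
  set Pd : Fin n → Prop := fun y => ∀ x, y ≤ x → rkk A x + 1 ≤ rkk T x with hPd
  have hPtop : Pd ytop := by
    intro x hx
    have hxe : x = ytop := le_antisymm (htople x) hx
    have hAfull : A.filter (fun i => i ≤ x) = A := Finset.filter_true_of_mem
      (fun i _ => by rw [hxe]; exact htople i)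
    have hTfull : T.filter (fun i => i ≤ x) = T := Finset.filter_true_of_mem
      (fun i _ => by rw [hxe]; exact htople i)
    unfold rkk
    rw [hAfull, hTfull]
    omega
  have hne : (Finset.univ.filter Pd).Nonempty :=
    ⟨ytop, Finset.mem_filter.mpr ⟨Finset.mem_univ _, hPtop⟩⟩
  set j := (Finset.univ.filter Pd).min' hne with hjdef
  have hPj : Pd j := by
    have := Finset.min'_mem (Finset.univ.filter Pd) hne
    simp only [Finset.mem_filter] at this
    exact this.2
  have hmin : ∀ y, Pd y → j ≤ y := fun y hy =>
    Finset.min'_le _ _ (Finset.mem_filter.mpr ⟨Finset.mem_univ _, hy⟩)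
  have hkey : j ∈ T ∧ j ∉ A ∧ rkk T j = rkk A j + 1 := by
    rcases Nat.eq_zero_or_pos (j : ℕ) with hz | hpos
    · have hsub : T.filter (fun x => x ≤ j) ⊆ {j} := by
        intro i hi
        simp only [Finset.mem_filter] at hi
        have : (i : ℕ) ≤ (j : ℕ) := hi.2
        simp only [Finset.mem_singleton]
        exact Fin.ext (by omega)
      have hTj1 : rkk T j ≤ 1 := by
        have := Finset.card_le_card hsub
        simpa [rkk] using this
      have hAj : rkk A j + 1 ≤ rkk T j := hPj j (le_refl _)
      have hA0 : rkk A j = 0 := by omega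
      have hT1 : rkk T j = 1 := by omega
      have hjT : j ∈ T := by
        have hfe : T.filter (fun x => x ≤ j) = {j} :=
          Finset.eq_of_subset_of_card_le hsub (by rw [Finset.card_singleton]; exact hT1.ge)
        have : j ∈ T.filter (fun x => x ≤ j) := by rw [hfe]; exact Finset.mem_singleton_self j
        exact (Finset.mem_filter.mp this).1
      have hjA : j ∉ A := by
        intro hjA
        have : j ∈ A.filter (fun x => x ≤ j) := by simp [hjA]
        have := Finset.card_pos.mpr ⟨j, this⟩
        unfold rkk at hA0
        omega
      exact ⟨hjT, hjA, by omega⟩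
    · have hylt : (j : ℕ) - 1 < n := by omega
      set y : Fin n := ⟨(j : ℕ) - 1, hylt⟩ with hy
      have hyj : (y : ℕ) + 1 = (j : ℕ) := by simp [hy]; omega
      have hyltj : y < j := by
        rw [Fin.lt_def]; simp [hy]; omega
      have hnPy : ¬ Pd y := by
        intro hPy
        exact absurd (hmin y hPy) (not_le.mpr hyltj)
      have hnPy' : ¬ ∀ x, y ≤ x → rkk A x + 1 ≤ rkk T x := hnPy
      push_neg at hnPy'
      obtain ⟨x, hyx, hx⟩ := hnPy'
      have hxy : x = y := by
        by_contra hne'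
        have : j ≤ x := by
          rw [Fin.le_def]
          have h1 : (y : ℕ) ≤ (x : ℕ) := hyx
          have h2 : (x : ℕ) ≠ (y : ℕ) := fun he => hne' (Fin.ext he)
          omega
        exact absurd (hPj x this) (by omega)
      subst hxy
      have hTj := rkk_succ (S := T) hyj
      have hAj := rkk_succ (S := A) hyj
      have hPjj := hPj j (le_refl _)
      by_cases hjT : j ∈ T
      · by_cases hjA : j ∈ A
        · exfalso
          rw [if_pos hjT] at hTj; rw [if_pos hjA] at hAj; omega
        · refine ⟨hjT, hjA, ?_⟩
          rw [if_pos hjT] at hTj; rw [if_neg hjA] at hAj; omega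
      · exfalso
        rw [if_neg hjT] at hTj
        by_cases hjA : j ∈ A
        · rw [if_pos hjA] at hAj; omega
        · rw [if_neg hjA] at hAj; omega
  obtain ⟨hjT, hjA, hrkj⟩ := hkey
  exact ⟨j, hjT, hjA, hrkj, hPj⟩

lemma exc {p : ℝ} (hp0 : 0 ≤ p) (hp1 : p < 1) (r c : Fin n → ℝ) (hr0 : ∀ j, 0 ≤ r j)
    (hrmono : ∀ i j : Fin n, i ≤ j → r j ≤ r i)
    {A T : Finset (Fin n)} (hcard : A.card < T.card) :
    ∃ j, j ∈ T ∧ j ∉ A ∧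
      zz p r c A + zz p r c T ≤ zz p r c (insert j A) + zz p r c (T.erase j) := by
  obtain ⟨j, hjT, hjA, hrkj, hP⟩ := pivot_exists hcard
  refine ⟨j, hjT, hjA, ?_⟩
  have key : ∀ t, gg r t A + gg r t T ≤ gg r t (insert j A) + gg r t (T.erase j) :=
    fun t => per_t r hr0 hrmono hjA hjT hrkj hP t
  have hc : (∑ i ∈ insert j A, c i) + (∑ i ∈ T.erase j, c i)
      = (∑ i ∈ A, c i) + (∑ i ∈ T, c i) := by
    rw [Finset.sum_insert hjA, ← Finset.sum_erase_add T c hjT]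
    ring
  have H1 : ∑ t ∈ Finset.range n, p ^ t * (gg r t A + gg r t T)
      ≤ ∑ t ∈ Finset.range n, p ^ t * (gg r t (insert j A) + gg r t (T.erase j)) :=
    Finset.sum_le_sum fun t _ => mul_le_mul_of_nonneg_left (key t) (pow_nonneg hp0 t)
  have H3 : (1 - p) * ∑ t ∈ Finset.range n, p ^ t * (gg r t A + gg r t T)
      ≤ (1 - p) * ∑ t ∈ Finset.range n, p ^ t * (gg r t (insert j A) + gg r t (T.erase j)) :=
    mul_le_mul_of_nonneg_left H1 (by linarith)
  have H2 : p ^ n * (gg r n A + gg r n T)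
      ≤ p ^ n * (gg r n (insert j A) + gg r n (T.erase j)) :=
    mul_le_mul_of_nonneg_left (key n) (pow_nonneg hp0 n)
  simp only [mul_add, Finset.sum_add_distrib] at H3 H2
  unfold zz
  rw [reward_rep hp1 r A, reward_rep hp1 r T, reward_rep hp1 r (insert j A),
    reward_rep hp1 r (T.erase j)]
  linarith

end UJSSPaux

/-- With identical success probabilities (`π_j = π` for all `j`), every greedy run terminates in an
optimal set: `z(S_m) = max_{S ⊆ {1,…,n}} z(S)`. -/
theorem greedy_optimal_equal_probabilities (n : ℕ) (pr r c : Fin n → ℝ)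
    (hpr : ∀ j, 0 ≤ pr j ∧ pr j < 1) (hr : ∀ j, 0 ≤ r j) (hc0 : ∀ j, 0 ≤ c j)
    (hZ : ∀ i j : Fin n, i ≤ j →
      pr j * r j / (1 - pr j) ≤ pr i * r i / (1 - pr i))
    (pconst : ℝ) (hpc : 0 ≤ pconst ∧ pconst < 1) (hpe : ∀ j, pr j = pconst)
    (m : ℕ) (S : ℕ → Finset (Fin n))
    (h0 : S 0 = ∅)
    (hstep : ∀ i < m, ∃ k ∉ S i, S (i + 1) = insert k (S i) ∧
        netz pr r c (S i) < netz pr r c (insert k (S i)) ∧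
        ∀ j ∉ S i, netz pr r c (insert j (S i)) ≤ netz pr r c (insert k (S i)))
    (hterm : ∀ j ∉ S m, netz pr r c (insert j (S m)) ≤ netz pr r c (S m)) :
    netz pr r c (S m) =
      (Finset.univ : Finset (Fin n)).powerset.sup' (Finset.powerset_nonempty _)
        (netz pr r c) := by
  classical
  obtain ⟨hpc0, hpc1⟩ := hpc
  have hbridge : ∀ S' : Finset (Fin n), netz pr r c S' = UJSSPaux.zz pconst r c S' := by
    intro S'
    unfold netz Rexp cst UJSSPaux.zz
    congr 1
    apply Finset.sum_congr rfl
    intro j _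
    congr 1
    rw [Finset.prod_congr rfl (fun i _ => hpe i), Finset.prod_const]
    rfl
  rcases eq_or_lt_of_le hpc0 with hp0 | hp0
  · -- degenerate case p = 0
    have hz0 : ∀ T : Finset (Fin n), netz pr r c T = - ∑ j ∈ T, c j := by
      intro T
      unfold netz Rexp cst
      have : ∀ j ∈ T, r j * ∏ i ∈ T.filter (fun i => i ≤ j), pr i = 0 := by
        intro j hj
        have hjf : j ∈ T.filter (fun i => i ≤ j) := by simp [hj]
        rw [Finset.prod_eq_zero hjf (by rw [hpe j, ← hp0])]
        ring
      rw [Finset.sum_congr rfl this]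
      simp
    have hm0 : m = 0 := by
      by_contra h
      obtain ⟨k, hk, hS1, hinc, _⟩ := hstep 0 (Nat.pos_of_ne_zero h)
      rw [h0] at hinc
      rw [hz0, hz0] at hinc
      rw [Finset.sum_empty, Finset.sum_insert (Finset.notMem_empty k), Finset.sum_empty] at hinc
      have := hc0 k
      linarith
    subst hm0
    rw [h0]
    apply le_antisymm
    · exact Finset.le_sup' (netz pr r c)
        (Finset.mem_powerset.mpr (Finset.subset_univ (∅ : Finset (Fin n))))
    · apply Finset.sup'_le
      intro T _
      rw [hz0 T, hz0 ∅, Finset.sum_empty]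
      have : 0 ≤ ∑ j ∈ T, c j := Finset.sum_nonneg fun j _ => hc0 j
      linarith
  · -- main case 0 < p < 1
    have hrmono : ∀ i j : Fin n, i ≤ j → r j ≤ r i := by
      intro i j hij
      have h := hZ i j hij
      rw [hpe i, hpe j] at h
      have h1p : 0 < 1 - pconst := by linarith
      have h2 : pconst * r j ≤ pconst * r i := by
        have := mul_le_mul_of_nonneg_right h (le_of_lt h1p)
        rwa [div_mul_cancel₀ _ (ne_of_gt h1p), div_mul_cancel₀ _ (ne_of_gt h1p)] at this
      exact le_of_mul_le_mul_left h2 hp0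
    have hexc : ∀ A T : Finset (Fin n), A.card < T.card →
        ∃ j, j ∈ T ∧ j ∉ A ∧ netz pr r c A + netz pr r c T
          ≤ netz pr r c (insert j A) + netz pr r c (T.erase j) := by
      intro A T h
      obtain ⟨j, h1, h2, h3⟩ := UJSSPaux.exc hpc0 hpc1 r c hr hrmono h
      exact ⟨j, h1, h2, by
        rw [hbridge A, hbridge T, hbridge (insert j A), hbridge (T.erase j)]
        exact h3⟩
    have hcard : ∀ i, i ≤ m → (S i).card = i := by
      intro i
      induction i with
      | zero => intro _; rw [h0]; exact Finset.card_empty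
      | succ i ih =>
        intro h
        obtain ⟨k, hk, hS, _, _⟩ := hstep i (by omega)
        rw [hS, Finset.card_insert_of_notMem hk, ih (by omega)]
    have hSle : ∀ j, j ≤ m → ∀ i, i ≤ j → netz pr r c (S i) ≤ netz pr r c (S j) := by
      intro j
      induction j with
      | zero => intro _ i hi; have : i = 0 := by omega
                rw [this]
      | succ j ih =>
        intro hj i hi
        obtain ⟨k, hk, hS, hinc, _⟩ := hstep j (by omega)
        rcases Nat.eq_or_lt_of_le hi with he | hlt
        · rw [he]
        · have h1 : netz pr r c (S i) ≤ netz pr r c (S j) := ih (by omega) i (by omega)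
          have h2 : netz pr r c (S j) ≤ netz pr r c (S (j + 1)) := by
            rw [hS]; exact le_of_lt hinc
          linarith
    have hopt : ∀ i, i ≤ m → ∀ T : Finset (Fin n), T.card = i →
        netz pr r c T ≤ netz pr r c (S i) := by
      intro i
      induction i with
      | zero =>
        intro _ T hT
        rw [Finset.card_eq_zero.mp hT, h0]
      | succ i ih =>
        intro hi1 T hT
        obtain ⟨k, hk, hSik, hinc, hmax⟩ := hstep i (by omega)
        have hcardSi : (S i).card = i := hcard i (by omega)
        have hlt : (S i).card < T.card := by omega
        obtain ⟨j, hjT, hjA, hine⟩ := hexc (S i) T hlt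
        have h1 : netz pr r c (T.erase j) ≤ netz pr r c (S i) := by
          apply ih (by omega)
          rw [Finset.card_erase_of_mem hjT, hT]
          omega
        have h2 : netz pr r c (insert j (S i)) ≤ netz pr r c (insert k (S i)) := hmax j hjA
        rw [hSik]
        linarith
    have hglobal : ∀ k, ∀ T : Finset (Fin n), T.card = k → netz pr r c T ≤ netz pr r c (S m) := by
      intro k
      induction k using Nat.strong_induction_on with
      | _ k IH =>
        intro T hk
        rcases le_or_gt k m with hle | hgt
        · calc netz pr r c T ≤ netz pr r c (S k) := hopt k hle T hk
            _ ≤ netz pr r c (S m) := hSle m (le_refl m) k hle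
        · have hlt : (S m).card < T.card := by rw [hcard m (le_refl m), hk]; exact hgt
          obtain ⟨j, hjT, hjS, hine⟩ := hexc (S m) T hlt
          have h2 := hterm j hjS
          have h3 : netz pr r c (T.erase j) ≤ netz pr r c (S m) := by
            apply IH (k - 1) (by omega)
            rw [Finset.card_erase_of_mem hjT, hk]
          linarith
    apply le_antisymm
    · exact Finset.le_sup' (netz pr r c)
        (Finset.mem_powerset.mpr (Finset.subset_univ (S m)))
    · exact Finset.sup'_le _ _ fun T _ => hglobal T.card T rfl
end

section
/- The optimal value of the compact MILP formulation of UJSSP equals the optimal expected net profit: the maximum of Σ_{j=1}^n (r_j P_j − c_j x_j) over all x ∈ {0,1}^n and P ∈ ℝ^n with P_j ≥ 0 for all j, P_j ≤ π_j x_j for all j, and P_j ≤ π_j (P_i + 1 − x_i) for all i < j, is attained and equals max_{S ⊆ {1,…,n}} z(S). -/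
section Helpers

variable {n : ℕ}

lemma filter_le_insert (S : Finset (Fin n)) {j : Fin n} (hj : j ∈ S) :
    S.filter (fun i => i ≤ j) = insert j (S.filter (fun i => i < j)) := by
  ext k
  simp only [Finset.mem_filter, Finset.mem_insert]
  constructor
  · rintro ⟨hk, hle⟩
    rcases eq_or_lt_of_le hle with h | h
    · exact Or.inl h
    · exact Or.inr ⟨hk, h⟩
  · rintro (rfl | ⟨hk, hlt⟩)
    · exact ⟨hj, le_rfl⟩
    · exact ⟨hk, hlt.le⟩

lemma prod_filter_split (pr : Fin n → ℝ) (S : Finset (Fin n)) {j : Fin n} (hj : j ∈ S) :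
    ∏ i ∈ S.filter (fun i => i ≤ j), pr i
      = pr j * ∏ i ∈ S.filter (fun i => i < j), pr i := by
  rw [filter_le_insert S hj, Finset.prod_insert (by simp)]

lemma prod_nonneg_pr (pr : Fin n → ℝ) (hpr : ∀ j, 0 ≤ pr j ∧ pr j < 1)
    (T : Finset (Fin n)) : 0 ≤ ∏ i ∈ T, pr i :=
  Finset.prod_nonneg fun i _ => (hpr i).1

lemma prod_le_one_pr (pr : Fin n → ℝ) (hpr : ∀ j, 0 ≤ pr j ∧ pr j < 1)
    (T : Finset (Fin n)) : ∏ i ∈ T, pr i ≤ 1 :=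
  Finset.prod_le_one (fun i _ => (hpr i).1) (fun i _ => (hpr i).2.le)

lemma prod_subset_ge (pr : Fin n → ℝ) (hpr : ∀ j, 0 ≤ pr j ∧ pr j < 1)
    {s t : Finset (Fin n)} (h : s ⊆ t) :
    ∏ i ∈ t, pr i ≤ ∏ i ∈ s, pr i := by
  rw [← Finset.prod_sdiff h]
  calc (∏ i ∈ t \ s, pr i) * ∏ i ∈ s, pr i
      ≤ 1 * ∏ i ∈ s, pr i := by
        apply mul_le_mul_of_nonneg_right (prod_le_one_pr pr hpr _)
          (prod_nonneg_pr pr hpr _)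
    _ = ∏ i ∈ s, pr i := one_mul _

/-- Key bound: any feasible `P` is dominated by the "natural" `P` of the set `S`. -/
lemma P_bound (pr : Fin n → ℝ) (hpr : ∀ j, 0 ≤ pr j ∧ pr j < 1)
    (x P : Fin n → ℝ) (S : Finset (Fin n))
    (hx : ∀ j, x j = if j ∈ S then 1 else 0)
    (hP0 : ∀ j, 0 ≤ P j)
    (hP1 : ∀ j, P j ≤ pr j * x j)
    (hP2 : ∀ i j : Fin n, i < j → P j ≤ pr j * (P i + 1 - x i)) :
    ∀ j, P j ≤ (if j ∈ S then ∏ i ∈ S.filter (fun i => i ≤ j), pr i else 0) := by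
  have H : ∀ m : ℕ, ∀ j : Fin n, j.val < m →
      P j ≤ (if j ∈ S then ∏ i ∈ S.filter (fun i => i ≤ j), pr i else 0) := by
    intro m
    induction m with
    | zero => intro j hj; omega
    | succ m ih =>
      intro j _
      by_cases hjS : j ∈ S
      · simp only [hjS, if_true]
        by_cases hne : (S.filter (fun i => i < j)).Nonempty
        · set i := (S.filter (fun i => i < j)).max' hne with hidef
          have hiS : i ∈ S.filter (fun k => k < j) := Finset.max'_mem _ hne
          have hiS' : i ∈ S := (Finset.mem_filter.mp hiS).1
          have hij : i < j := (Finset.mem_filter.mp hiS).2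
          have him : i.val < m := by
            have := (Fin.lt_def.mp hij)
            omega
          have hPi := ih i him
          simp only [hiS', if_true] at hPi
          have hxi : x i = 1 := by rw [hx]; simp [hiS']
          have h1 : P j ≤ pr j * P i := by
            have := hP2 i j hij
            rw [hxi] at this
            simpa using this
          have hfil : S.filter (fun k => k ≤ i) = S.filter (fun k => k < j) := by
            ext k
            simp only [Finset.mem_filter]
            constructor
            · rintro ⟨hk, hki⟩; exact ⟨hk, lt_of_le_of_lt hki hij⟩
            · rintro ⟨hk, hkj⟩
              exact ⟨hk, Finset.le_max' (S.filter (fun i => i < j)) k (Finset.mem_filter.mpr ⟨hk, hkj⟩)⟩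
          calc P j ≤ pr j * P i := h1
            _ ≤ pr j * ∏ k ∈ S.filter (fun k => k ≤ i), pr k :=
                mul_le_mul_of_nonneg_left hPi (hpr j).1
            _ = pr j * ∏ k ∈ S.filter (fun k => k < j), pr k := by rw [hfil]
            _ = ∏ k ∈ S.filter (fun k => k ≤ j), pr k :=
                (prod_filter_split pr S hjS).symm
        · have hfil : S.filter (fun k => k < j) = ∅ :=
            Finset.not_nonempty_iff_eq_empty.mp hne
          rw [prod_filter_split pr S hjS, hfil]
          simp only [Finset.prod_empty, mul_one]
          have := hP1 j
          rw [hx] at this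
          simpa [hjS] using this
      · simp only [hjS, if_false]
        have := hP1 j
        rw [hx] at this
        simpa [hjS] using this
  intro j
  exact H (j.val + 1) j (by omega)

end Helpers

/-- The compact MILP formulation of UJSSP: the maximum of
`Σ_j (r_j P_j − c_j x_j)` over `x ∈ {0,1}^n`, `P ≥ 0`, `P_j ≤ π_j x_j`, and
`P_j ≤ π_j (P_i + 1 − x_i)` for `i < j`, is attained and equals
`max_{S ⊆ {1,…,n}} z(S)`. -/
theorem milp_formulation_correct (n : ℕ) (pr r c : Fin n → ℝ)
    (hpr : ∀ j, 0 ≤ pr j ∧ pr j < 1) (hr : ∀ j, 0 ≤ r j) (hc : ∀ j, 0 ≤ c j)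
    (hZ : ∀ i j : Fin n, i ≤ j →
      pr j * r j / (1 - pr j) ≤ pr i * r i / (1 - pr i)) :
    IsGreatest
      {v : ℝ | ∃ x P : Fin n → ℝ,
        (∀ j, x j = 0 ∨ x j = 1) ∧
        (∀ j, 0 ≤ P j) ∧
        (∀ j, P j ≤ pr j * x j) ∧
        (∀ i j : Fin n, i < j → P j ≤ pr j * (P i + 1 - x i)) ∧
        v = ∑ j, (r j * P j - c j * x j)}
      ((Finset.univ : Finset (Fin n)).powerset.sup' (Finset.powerset_nonempty _)
        (netz pr r c)) := by
  -- For any set S, the natural (x, P) is feasible with value netz S.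
  have feas : ∀ S : Finset (Fin n),
      ∃ x P : Fin n → ℝ,
        (∀ j, x j = 0 ∨ x j = 1) ∧
        (∀ j, 0 ≤ P j) ∧
        (∀ j, P j ≤ pr j * x j) ∧
        (∀ i j : Fin n, i < j → P j ≤ pr j * (P i + 1 - x i)) ∧
        netz pr r c S = ∑ j, (r j * P j - c j * x j) := by
    intro S
    refine ⟨fun j => if j ∈ S then 1 else 0,
      fun j => if j ∈ S then ∏ i ∈ S.filter (fun i => i ≤ j), pr i else 0,
      ?_, ?_, ?_, ?_, ?_⟩
    · intro j; by_cases h : j ∈ S <;> simp [h]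
    · intro j
      by_cases h : j ∈ S <;> simp [h, prod_nonneg_pr pr hpr]
    · intro j
      by_cases h : j ∈ S
      · simp only [h, if_true, mul_one]
        rw [prod_filter_split pr S h]
        calc pr j * ∏ i ∈ S.filter (fun i => i < j), pr i
            ≤ pr j * 1 := mul_le_mul_of_nonneg_left
              (prod_le_one_pr pr hpr _) (hpr j).1
          _ = pr j := mul_one _
      · simp [h]
    · intro i j hij
      by_cases hj : j ∈ S
      · by_cases hi : i ∈ S
        · simp only [hj, hi, if_true]
          rw [prod_filter_split pr S hj]
          have hss : S.filter (fun k => k ≤ i) ⊆ S.filter (fun k => k < j) := by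
            intro k hk
            simp only [Finset.mem_filter] at *
            exact ⟨hk.1, lt_of_le_of_lt hk.2 hij⟩
          have := prod_subset_ge pr hpr hss
          calc pr j * ∏ k ∈ S.filter (fun k => k < j), pr k
              ≤ pr j * ∏ k ∈ S.filter (fun k => k ≤ i), pr k :=
                mul_le_mul_of_nonneg_left this (hpr j).1
            _ ≤ pr j * ((∏ k ∈ S.filter (fun k => k ≤ i), pr k) + 1 - 1) := by
                ring_nf; exact le_refl _
        · simp only [hj, hi, if_true, if_false]
          have h1 : ∏ k ∈ S.filter (fun k => k ≤ j), pr k ≤ pr j := by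
            rw [prod_filter_split pr S hj]
            calc pr j * ∏ k ∈ S.filter (fun k => k < j), pr k
                ≤ pr j * 1 := mul_le_mul_of_nonneg_left
                  (prod_le_one_pr pr hpr _) (hpr j).1
              _ = pr j := mul_one _
          calc ∏ k ∈ S.filter (fun k => k ≤ j), pr k ≤ pr j := h1
            _ = pr j * (0 + 1 - 0) := by ring
      · simp only [hj, if_false]
        apply mul_nonneg (hpr j).1
        by_cases hi : i ∈ S <;>
          simp [hi, prod_nonneg_pr pr hpr]
    · -- value computation
      have hsum : ∀ j : Fin n,
          (r j * (if j ∈ S then ∏ i ∈ S.filter (fun i => i ≤ j), pr i else 0)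
            - c j * (if j ∈ S then 1 else 0))
          = (if j ∈ S then
              r j * (∏ i ∈ S.filter (fun i => i ≤ j), pr i) - c j else 0) := by
        intro j; by_cases h : j ∈ S <;> simp [h]
      rw [Finset.sum_congr rfl (fun j _ => hsum j)]
      rw [Finset.sum_ite_mem, Finset.univ_inter, Finset.sum_sub_distrib]
      rfl
  constructor
  · -- membership: the sup' value is attained by some feasible point
    obtain ⟨S, _, hSeq⟩ := Finset.exists_mem_eq_sup'
      (Finset.powerset_nonempty (Finset.univ : Finset (Fin n))) (netz pr r c)
    obtain ⟨x, P, h1, h2, h3, h4, h5⟩ := feas S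
    exact ⟨x, P, h1, h2, h3, h4, by rw [hSeq]; exact h5⟩
  · -- upper bound
    rintro v ⟨x, P, hx01, hP0, hP1, hP2, rfl⟩
    set S : Finset (Fin n) := Finset.univ.filter (fun j => x j = 1) with hSdef
    have hxS : ∀ j, x j = if j ∈ S then 1 else 0 := by
      intro j
      by_cases h : j ∈ S
      · simp only [hSdef, Finset.mem_filter] at h
        simp [h.2, hSdef, Finset.mem_filter, h]
      · have : x j ≠ 1 := by
          intro hx1
          exact h (by simp [hSdef, hx1])
        rcases hx01 j with h0 | h1
        · simp [h, h0]
        · exact absurd h1 this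
    have key := P_bound pr hpr x P S hxS hP0 hP1 hP2
    have hle : ∑ j, (r j * P j - c j * x j) ≤ netz pr r c S := by
      have hRle : ∑ j, r j * P j ≤ Rexp pr r S := by
        have : ∀ j : Fin n, r j * P j ≤
            (if j ∈ S then r j * ∏ i ∈ S.filter (fun i => i ≤ j), pr i else 0) := by
          intro j
          by_cases h : j ∈ S
          · simp only [h, if_true]
            exact mul_le_mul_of_nonneg_left (by simpa [h] using key j) (hr j)
          · simp only [h, if_false]
            have := key j
            simp only [h, if_false] at this
            have hPj : P j = 0 := le_antisymm this (hP0 j)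
            simp [hPj]
        calc ∑ j, r j * P j
            ≤ ∑ j, (if j ∈ S then r j * ∏ i ∈ S.filter (fun i => i ≤ j), pr i else 0) :=
              Finset.sum_le_sum fun j _ => this j
          _ = ∑ j ∈ S, r j * ∏ i ∈ S.filter (fun i => i ≤ j), pr i := by
              rw [Finset.sum_ite_mem, Finset.univ_inter]
          _ = Rexp pr r S := rfl
      have hCeq : ∑ j, c j * x j = cst c S := by
        have : ∀ j : Fin n, c j * x j = (if j ∈ S then c j else 0) := by
          intro j; rw [hxS j]; by_cases h : j ∈ S <;> simp [h]
        rw [Finset.sum_congr rfl (fun j _ => this j), Finset.sum_ite_mem,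
          Finset.univ_inter]
        rfl
      rw [Finset.sum_sub_distrib, hCeq]
      exact sub_le_sub_right hRle _
    refine le_trans hle ?_
    exact Finset.le_sup' (netz pr r c) (by simp)
end

section
/- The expected reward function is submodular: if jobs are indexed in non-increasing Z order, then for all subsets S ⊆ T ⊆ {1,…,n} and every j ∉ T, R(S ∪ {j}) − R(S) ≥ R(T ∪ {j}) − R(T). -/
namespace UJSSPaux

variable {n : ℕ} {pr r : Fin n → ℝ}

lemma prod_split (S : Finset (Fin n)) {j k : Fin n} (hjk : j ≤ k) :
    ∏ i ∈ S.filter (fun i => i ≤ k), pr i =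
      (∏ i ∈ S.filter (fun i => i ≤ j), pr i) *
      ∏ i ∈ (S.filter (fun i => j < i)).filter (fun i => i ≤ k), pr i := by
  rw [← Finset.prod_filter_mul_prod_filter_not (S.filter (fun i => i ≤ k)) (fun i => i ≤ j)]
  congr 1
  · apply Finset.prod_congr _ (fun _ _ => rfl)
    rw [Finset.filter_filter]
    apply Finset.filter_congr
    intro i _
    constructor
    · intro h; exact h.2
    · intro h; exact ⟨le_trans h hjk, h⟩
  · apply Finset.prod_congr _ (fun _ _ => rfl)
    rw [Finset.filter_filter, Finset.filter_filter]
    apply Finset.filter_congr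
    intro i _
    simp only [decide_eq_true_eq, not_le]
    constructor
    · intro h; exact ⟨h.2, h.1⟩
    · intro h; exact ⟨h.2, h.1⟩

lemma key (hpr : ∀ j, 0 ≤ pr j ∧ pr j < 1) (hr : ∀ j, 0 ≤ r j)
    (hZ : ∀ i j : Fin n, i ≤ j →
      pr j * r j / (1 - pr j) ≤ pr i * r i / (1 - pr i))
    (p : Fin n) (U : Finset (Fin n)) (hU : ∀ k ∈ U, p < k) :
    ∑ k ∈ U, r k * ∏ i ∈ U.filter (fun i => i ≤ k), pr i ≤
      pr p * r p / (1 - pr p) * (1 - ∏ i ∈ U, pr i) := by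
  induction U using Finset.induction_on_max with
  | empty => simp
  | insert M U hM ih =>
    have hMU : M ∉ U := fun h => lt_irrefl M (hM M h)
    have hU' : ∀ k ∈ U, p < k := fun k hk => hU k (Finset.mem_insert_of_mem hk)
    have hpM : p ≤ M := (hU M (Finset.mem_insert_self M U)).le
    have h1p : (0:ℝ) < 1 - pr p := by linarith [(hpr p).2]
    have h1M : (0:ℝ) < 1 - pr M := by linarith [(hpr M).2]
    have hZp : (0:ℝ) ≤ pr p * r p / (1 - pr p) :=
      div_nonneg (mul_nonneg (hpr p).1 (hr p)) h1p.le
    have hprod0 : (0:ℝ) ≤ ∏ i ∈ U, pr i := Finset.prod_nonneg fun i _ => (hpr i).1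
    -- rewrite the sum over insert M U
    rw [Finset.sum_insert hMU, Finset.prod_insert hMU]
    have hfM : (insert M U).filter (fun i => i ≤ M) = insert M U := by
      apply Finset.filter_true_of_mem
      intro i hi
      rcases Finset.mem_insert.mp hi with h | h
      · exact h ▸ le_refl M
      · exact (hM i h).le
    have hfk : ∀ k ∈ U, (insert M U).filter (fun i => i ≤ k) = U.filter (fun i => i ≤ k) := by
      intro k hk
      rw [Finset.filter_insert, if_neg (not_le.mpr (hM k hk))]
    have hsum : ∑ k ∈ U, r k * ∏ i ∈ (insert M U).filter (fun i => i ≤ k), pr i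
        = ∑ k ∈ U, r k * ∏ i ∈ U.filter (fun i => i ≤ k), pr i := by
      apply Finset.sum_congr rfl
      intro k hk
      rw [hfk k hk]
    rw [hfM, Finset.prod_insert hMU, hsum]
    have hih := ih hU'
    -- r M * (pr M * ∏) ≤ Z_p * (1 - pr M) * ∏
    have hZM : pr M * r M / (1 - pr M) ≤ pr p * r p / (1 - pr p) := hZ p M hpM
    have hrM : pr M * r M ≤ pr p * r p / (1 - pr p) * (1 - pr M) := by
      have := (div_le_iff₀ h1M).mp hZM
      linarith
    nlinarith [mul_le_mul_of_nonneg_right hrM hprod0]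

/-- marginal gain formula -/
lemma marg_formula (pr r : Fin n → ℝ) (S : Finset (Fin n)) (j : Fin n) (hj : j ∉ S) :
    Rexp pr r (insert j S) - Rexp pr r S =
      pr j * r j * (∏ i ∈ S.filter (fun i => i ≤ j), pr i)
      - (1 - pr j) * ∑ k ∈ S.filter (fun k => j < k),
          r k * ∏ i ∈ S.filter (fun i => i ≤ k), pr i := by
  unfold Rexp
  rw [Finset.sum_insert hj]
  have hjterm : (insert j S).filter (fun i => i ≤ j) = insert j (S.filter (fun i => i ≤ j)) := by
    rw [Finset.filter_insert, if_pos (le_refl j)]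
  have hjnot : j ∉ S.filter (fun i => i ≤ j) := fun h => hj (Finset.mem_filter.mp h).1
  have hP : ∀ k ∈ S, (∏ i ∈ (insert j S).filter (fun i => i ≤ k), pr i)
      = (if j < k then pr j else 1) * ∏ i ∈ S.filter (fun i => i ≤ k), pr i := by
    intro k hk
    rw [Finset.filter_insert]
    by_cases h : j ≤ k
    · have hjk : j < k := lt_of_le_of_ne h (fun e => hj (e ▸ hk))
      have hjnot' : j ∉ S.filter (fun i => i ≤ k) := fun h => hj (Finset.mem_filter.mp h).1
      rw [if_pos h, Finset.prod_insert hjnot', if_pos hjk]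
    · rw [if_neg h, if_neg (fun hh => h hh.le), one_mul]
  rw [hjterm, Finset.prod_insert hjnot]
  have hsum : ∑ k ∈ S, r k * ∏ i ∈ (insert j S).filter (fun i => i ≤ k), pr i
      = ∑ k ∈ S, r k * ((if j < k then pr j else 1) * ∏ i ∈ S.filter (fun i => i ≤ k), pr i) := by
    apply Finset.sum_congr rfl
    intro k hk
    rw [hP k hk]
  rw [hsum]
  have hsplit : ∑ k ∈ S, r k * ((if j < k then pr j else 1) * ∏ i ∈ S.filter (fun i => i ≤ k), pr i)
      - ∑ k ∈ S, r k * ∏ i ∈ S.filter (fun i => i ≤ k), pr i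
      = ∑ k ∈ S.filter (fun k => j < k),
          (pr j - 1) * (r k * ∏ i ∈ S.filter (fun i => i ≤ k), pr i) := by
    rw [← Finset.sum_sub_distrib, Finset.sum_filter]
    apply Finset.sum_congr rfl
    intro k _
    by_cases h : j < k
    · rw [if_pos h, if_pos h]; ring
    · rw [if_neg h, if_neg h]; ring
  have : ∀ a b c : ℝ, a + b - c = (b - c) + a := fun a b c => by ring
  rw [this, hsplit, ← Finset.mul_sum]
  ring

lemma marg_nonneg (hpr : ∀ j, 0 ≤ pr j ∧ pr j < 1) (hr : ∀ j, 0 ≤ r j)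
    (hZ : ∀ i j : Fin n, i ≤ j →
      pr j * r j / (1 - pr j) ≤ pr i * r i / (1 - pr i))
    (S : Finset (Fin n)) (j : Fin n) (hj : j ∉ S) :
    0 ≤ Rexp pr r (insert j S) - Rexp pr r S := by
  rw [marg_formula pr r S j hj]
  set A := ∏ i ∈ S.filter (fun i => i ≤ j), pr i with hA
  set U := S.filter (fun k => j < k) with hUdef
  have hA0 : 0 ≤ A := Finset.prod_nonneg fun i _ => (hpr i).1
  have h1j : (0:ℝ) < 1 - pr j := by linarith [(hpr j).2]
  have hZj : (0:ℝ) ≤ pr j * r j / (1 - pr j) :=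
    div_nonneg (mul_nonneg (hpr j).1 (hr j)) h1j.le
  have hBfact : ∑ k ∈ U, r k * ∏ i ∈ S.filter (fun i => i ≤ k), pr i
      = A * ∑ k ∈ U, r k * ∏ i ∈ U.filter (fun i => i ≤ k), pr i := by
    rw [Finset.mul_sum]
    apply Finset.sum_congr rfl
    intro k hk
    have hjk : j ≤ k := (Finset.mem_filter.mp hk).2.le
    rw [prod_split S hjk]
    ring
  have hkey := key hpr hr hZ j U (fun k hk => (Finset.mem_filter.mp hk).2)
  have hprodU0 : (0:ℝ) ≤ ∏ i ∈ U, pr i := Finset.prod_nonneg fun i _ => (hpr i).1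
  have hB : ∑ k ∈ U, r k * ∏ i ∈ U.filter (fun i => i ≤ k), pr i
      ≤ pr j * r j / (1 - pr j) := by
    calc _ ≤ pr j * r j / (1 - pr j) * (1 - ∏ i ∈ U, pr i) := hkey
      _ ≤ pr j * r j / (1 - pr j) * 1 := by
          apply mul_le_mul_of_nonneg_left _ hZj
          linarith
      _ = _ := mul_one _
  rw [hBfact]
  have hfinal : (1 - pr j) * (A * ∑ k ∈ U, r k * ∏ i ∈ U.filter (fun i => i ≤ k), pr i)
      ≤ (1 - pr j) * (A * (pr j * r j / (1 - pr j))) := by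
    apply mul_le_mul_of_nonneg_left _ h1j.le
    exact mul_le_mul_of_nonneg_left hB hA0
  have hcancel : (1 - pr j) * (A * (pr j * r j / (1 - pr j))) = pr j * r j * A := by
    field_simp
  linarith

lemma marg_step (hpr : ∀ j, 0 ≤ pr j ∧ pr j < 1) (hr : ∀ j, 0 ≤ r j)
    (hZ : ∀ i j : Fin n, i ≤ j →
      pr j * r j / (1 - pr j) ≤ pr i * r i / (1 - pr i))
    (S : Finset (Fin n)) (j m : Fin n) (hj : j ∉ S) (hm : m ∉ S) (hjm : j ≠ m) :
    Rexp pr r (insert j (insert m S)) - Rexp pr r (insert m S) ≤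
      Rexp pr r (insert j S) - Rexp pr r S := by
  have hjS' : j ∉ insert m S := by
    simp only [Finset.mem_insert]
    rintro (h | h)
    · exact hjm h
    · exact hj h
  rw [marg_formula pr r S j hj, marg_formula pr r (insert m S) j hjS']
  rcases lt_or_gt_of_ne hjm with hlt | hgt
  · -- j < m : new element after j
    -- A unchanged
    have hA : (insert m S).filter (fun i => i ≤ j) = S.filter (fun i => i ≤ j) := by
      rw [Finset.filter_insert, if_neg (not_le.mpr hlt)]
    have hU : (insert m S).filter (fun k => j < k) = insert m (S.filter (fun k => j < k)) := by
      rw [Finset.filter_insert, if_pos hlt]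
    have hmnotU : m ∉ S.filter (fun k => j < k) := fun h => hm (Finset.mem_filter.mp h).1
    rw [hA, hU, Finset.sum_insert hmnotU]
    set A := ∏ i ∈ S.filter (fun i => i ≤ j), pr i with hAdef
    -- term for m
    have hCm : (insert m S).filter (fun i => i ≤ m) = insert m (S.filter (fun i => i ≤ m)) := by
      rw [Finset.filter_insert, if_pos (le_refl m)]
    have hmnotC : m ∉ S.filter (fun i => i ≤ m) := fun h => hm (Finset.mem_filter.mp h).1
    set C := ∏ i ∈ S.filter (fun i => i ≤ m), pr i with hCdef
    have hCm' : ∏ i ∈ (insert m S).filter (fun i => i ≤ m), pr i = pr m * C := by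
      rw [hCm, Finset.prod_insert hmnotC]
    -- terms for k ∈ S.filter (j < ·)
    have hP : ∀ k ∈ S.filter (fun k => j < k),
        (∏ i ∈ (insert m S).filter (fun i => i ≤ k), pr i)
        = (if m < k then pr m else 1) * ∏ i ∈ S.filter (fun i => i ≤ k), pr i := by
      intro k hk
      have hkS : k ∈ S := (Finset.mem_filter.mp hk).1
      rw [Finset.filter_insert]
      by_cases h : m ≤ k
      · have hmk : m < k := lt_of_le_of_ne h (fun e => hm (e ▸ hkS))
        have hmn : m ∉ S.filter (fun i => i ≤ k) := fun hh => hm (Finset.mem_filter.mp hh).1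
        rw [if_pos h, Finset.prod_insert hmn, if_pos hmk]
      · rw [if_neg h, if_neg (fun hh => h hh.le), one_mul]
    have hsum : ∑ k ∈ S.filter (fun k => j < k),
          r k * ∏ i ∈ (insert m S).filter (fun i => i ≤ k), pr i
        = ∑ k ∈ S.filter (fun k => j < k),
          r k * ((if m < k then pr m else 1) * ∏ i ∈ S.filter (fun i => i ≤ k), pr i) := by
      apply Finset.sum_congr rfl
      intro k hk
      rw [hP k hk]
    rw [hCm', hsum]
    -- now reduce to: B' - B ≥ 0 where difference collapses to filter (m < ·)
    have hdiff : ∑ k ∈ S.filter (fun k => j < k),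
          r k * ((if m < k then pr m else 1) * ∏ i ∈ S.filter (fun i => i ≤ k), pr i)
        - ∑ k ∈ S.filter (fun k => j < k),
          r k * ∏ i ∈ S.filter (fun i => i ≤ k), pr i
        = ∑ k ∈ S.filter (fun k => m < k),
            (pr m - 1) * (r k * ∏ i ∈ S.filter (fun i => i ≤ k), pr i) := by
      rw [← Finset.sum_sub_distrib]
      have hff : S.filter (fun k => m < k)
          = (S.filter (fun k => j < k)).filter (fun k => m < k) := by
        rw [Finset.filter_filter]
        apply Finset.filter_congr
        intro k _
        constructor
        · intro h; exact ⟨lt_trans hlt h, h⟩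
        · intro h; exact h.2
      rw [hff]
      conv_rhs => rw [Finset.sum_filter]
      apply Finset.sum_congr rfl
      intro k _
      by_cases h : m < k
      · rw [if_pos h, if_pos h]; ring
      · rw [if_neg h, if_neg h]; ring
    -- bound the tail sum at m
    set V := S.filter (fun k => m < k) with hVdef
    have hC0 : 0 ≤ C := Finset.prod_nonneg fun i _ => (hpr i).1
    have h1m : (0:ℝ) < 1 - pr m := by linarith [(hpr m).2]
    have h1j : (0:ℝ) < 1 - pr j := by linarith [(hpr j).2]
    have hZm : (0:ℝ) ≤ pr m * r m / (1 - pr m) :=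
      div_nonneg (mul_nonneg (hpr m).1 (hr m)) h1m.le
    have hVfact : ∑ k ∈ V, r k * ∏ i ∈ S.filter (fun i => i ≤ k), pr i
        = C * ∑ k ∈ V, r k * ∏ i ∈ V.filter (fun i => i ≤ k), pr i := by
      rw [Finset.mul_sum]
      apply Finset.sum_congr rfl
      intro k hk
      have hmk : m ≤ k := (Finset.mem_filter.mp hk).2.le
      rw [prod_split S hmk]
      ring
    have hkey := key hpr hr hZ m V (fun k hk => (Finset.mem_filter.mp hk).2)
    have hprodV0 : (0:ℝ) ≤ ∏ i ∈ V, pr i := Finset.prod_nonneg fun i _ => (hpr i).1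
    have hVle : ∑ k ∈ V, r k * ∏ i ∈ V.filter (fun i => i ≤ k), pr i
        ≤ pr m * r m / (1 - pr m) := by
      calc _ ≤ pr m * r m / (1 - pr m) * (1 - ∏ i ∈ V, pr i) := hkey
        _ ≤ pr m * r m / (1 - pr m) * 1 := by
            apply mul_le_mul_of_nonneg_left _ hZm
            linarith
        _ = _ := mul_one _
    -- conclude
    have hBB : (1 - pr m) * ∑ k ∈ V, r k * ∏ i ∈ S.filter (fun i => i ≤ k), pr i
        ≤ pr m * r m * C := by
      rw [hVfact]
      have h1 : (1 - pr m) * (C * ∑ k ∈ V, r k * ∏ i ∈ V.filter (fun i => i ≤ k), pr i)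
          ≤ (1 - pr m) * (C * (pr m * r m / (1 - pr m))) := by
        apply mul_le_mul_of_nonneg_left _ h1m.le
        exact mul_le_mul_of_nonneg_left hVle hC0
      have h2 : (1 - pr m) * (C * (pr m * r m / (1 - pr m))) = pr m * r m * C := by
        field_simp
      linarith
    -- B' - B = r m * (pr m * C) + sum_V (pr m - 1) * term ≥ 0
    -- target inequality after formula rewrite:
    have hsumV : ∑ k ∈ V, (pr m - 1) * (r k * ∏ i ∈ S.filter (fun i => i ≤ k), pr i)
        = (pr m - 1) * ∑ k ∈ V, r k * ∏ i ∈ S.filter (fun i => i ≤ k), pr i := by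
      rw [Finset.mul_sum]
    nlinarith [hdiff, hsumV, hBB, h1j]
  · -- m < j : everything scales by pr m, and marginal at S is nonnegative
    have hA : (insert m S).filter (fun i => i ≤ j)
        = insert m (S.filter (fun i => i ≤ j)) := by
      rw [Finset.filter_insert, if_pos hgt.le]
    have hmnotA : m ∉ S.filter (fun i => i ≤ j) := fun h => hm (Finset.mem_filter.mp h).1
    have hU : (insert m S).filter (fun k => j < k) = S.filter (fun k => j < k) := by
      rw [Finset.filter_insert, if_neg (not_lt.mpr hgt.le)]
    have hP : ∀ k ∈ S.filter (fun k => j < k),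
        (∏ i ∈ (insert m S).filter (fun i => i ≤ k), pr i)
        = pr m * ∏ i ∈ S.filter (fun i => i ≤ k), pr i := by
      intro k hk
      have hkS : k ∈ S := (Finset.mem_filter.mp hk).1
      have hjk : j < k := (Finset.mem_filter.mp hk).2
      have hmk : m ≤ k := (lt_trans hgt hjk).le
      have hmn : m ∉ S.filter (fun i => i ≤ k) := fun hh => hm (Finset.mem_filter.mp hh).1
      rw [Finset.filter_insert, if_pos hmk, Finset.prod_insert hmn]
    rw [hA, Finset.prod_insert hmnotA, hU]
    have hsum : ∑ k ∈ S.filter (fun k => j < k),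
          r k * ∏ i ∈ (insert m S).filter (fun i => i ≤ k), pr i
        = pr m * ∑ k ∈ S.filter (fun k => j < k),
          r k * ∏ i ∈ S.filter (fun i => i ≤ k), pr i := by
      rw [Finset.mul_sum]
      apply Finset.sum_congr rfl
      intro k hk
      rw [hP k hk]
      ring
    rw [hsum]
    -- LHS = pr m * RHS-expression ; use nonnegativity of marginal
    have hnn := marg_nonneg hpr hr hZ S j hj
    rw [marg_formula pr r S j hj] at hnn
    have hm1 : pr m ≤ 1 := (hpr m).2.le
    have hm0 : 0 ≤ pr m := (hpr m).1
    nlinarith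

lemma marg_mono_aux (hpr : ∀ j, 0 ≤ pr j ∧ pr j < 1) (hr : ∀ j, 0 ≤ r j)
    (hZ : ∀ i j : Fin n, i ≤ j →
      pr j * r j / (1 - pr j) ≤ pr i * r i / (1 - pr i))
    (U : Finset (Fin n)) :
    ∀ (S : Finset (Fin n)) (j : Fin n), Disjoint U S → j ∉ S → j ∉ U →
      Rexp pr r (insert j (S ∪ U)) - Rexp pr r (S ∪ U) ≤
        Rexp pr r (insert j S) - Rexp pr r S := by
  induction U using Finset.induction_on with
  | empty => intro S j _ _ _; simp
  | @insert m U' hmU' ih =>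
    intro S j hdisj hjS hjU
    have hmS : m ∉ S := by
      intro h
      exact (Finset.disjoint_left.mp hdisj (Finset.mem_insert_self m U')) h
    have hdisj' : Disjoint U' S :=
      Finset.disjoint_of_subset_left (Finset.subset_insert m U') hdisj
    have hjU' : j ∉ U' := fun h => hjU (Finset.mem_insert_of_mem h)
    have hjm : j ≠ m := fun h => hjU (h ▸ Finset.mem_insert_self m U')
    have hmSU' : m ∉ S ∪ U' := by
      simp only [Finset.mem_union]
      rintro (h | h)
      · exact hmS h
      · exact hmU' h
    have hjSU' : j ∉ S ∪ U' := by
      simp only [Finset.mem_union]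
      rintro (h | h)
      · exact hjS h
      · exact hjU' h
    have heq : S ∪ insert m U' = insert m (S ∪ U') := by
      ext x
      simp only [Finset.mem_union, Finset.mem_insert]
      tauto
    rw [heq]
    calc Rexp pr r (insert j (insert m (S ∪ U'))) - Rexp pr r (insert m (S ∪ U'))
        ≤ Rexp pr r (insert j (S ∪ U')) - Rexp pr r (S ∪ U') :=
          marg_step hpr hr hZ (S ∪ U') j m hjSU' hmSU' hjm
      _ ≤ Rexp pr r (insert j S) - Rexp pr r S := ih S j hdisj' hjS hjU'

end UJSSPaux

/-- The expected reward function is submodular: for `S ⊆ T` and `j ∉ T`,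
`R(S ∪ {j}) − R(S) ≥ R(T ∪ {j}) − R(T)`. -/
theorem Rexp_submodular (n : ℕ) (pr r : Fin n → ℝ)
    (hpr : ∀ j, 0 ≤ pr j ∧ pr j < 1) (hr : ∀ j, 0 ≤ r j)
    (hZ : ∀ i j : Fin n, i ≤ j →
      pr j * r j / (1 - pr j) ≤ pr i * r i / (1 - pr i))
    (S T : Finset (Fin n)) (hST : S ⊆ T) (j : Fin n) (hj : j ∉ T) :
    Rexp pr r (insert j T) - Rexp pr r T ≤ Rexp pr r (insert j S) - Rexp pr r S := by
  have hT : S ∪ (T \ S) = T := Finset.union_sdiff_of_subset hST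
  have hdisj : Disjoint (T \ S) S := Finset.sdiff_disjoint
  have hjS : j ∉ S := fun h => hj (hST h)
  have hjTS : j ∉ T \ S := fun h => hj (Finset.mem_sdiff.mp h).1
  have := UJSSPaux.marg_mono_aux hpr hr hZ (T \ S) S j hdisj hjS hjTS
  rwa [hT] at this
end

section
/- The sequencing problem UJSP is a special case of maximization over the polymatroid associated with f(S) = 1 − ∏_{j∈S} π_j: if jobs are indexed in non-increasing Z order, then the vector x* with x*_j = (∏_{i<j} π_i)(1 − π_j) satisfies Σ_{j∈S} x*_j ≤ 1 − ∏_{j∈S} π_j for every S ⊆ {1,…,n}, and for every x ∈ ℝ^n with x_j ≥ 0 for all j and Σ_{j∈S} x_j ≤ 1 − ∏_{j∈S} π_j for every S ⊆ {1,…,n}, one has Σ_{j=1}^n Z_j x_j ≤ Σ_{j=1}^n Z_j x*_j = Σ_{j=1}^n r_j ∏_{i≤j} π_i = R({1,…,n}). -/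
open Finset

/-- extension of a `Fin n`-indexed family to `ℕ`. -/
def extz {n : ℕ} (g : Fin n → ℝ) : ℕ → ℝ := fun i => if h : i < n then g ⟨i, h⟩ else 0

@[simp] lemma extz_coe {n : ℕ} (g : Fin n → ℝ) (j : Fin n) : extz g (j : ℕ) = g j := by
  simp [extz, j.isLt]

lemma prod_anti_subset {n : ℕ} (pr : Fin n → ℝ) (hpr : ∀ j, 0 ≤ pr j ∧ pr j < 1)
    {T U : Finset (Fin n)} (h : T ⊆ U) :
    ∏ i ∈ U, pr i ≤ ∏ i ∈ T, pr i := by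
  rw [← Finset.prod_sdiff h]
  exact mul_le_of_le_one_left (Finset.prod_nonneg fun i _ => (hpr i).1)
    (Finset.prod_le_one (fun i _ => (hpr i).1) (fun i _ => (hpr i).2.le))

lemma telesc {n : ℕ} (pr : Fin n → ℝ) (S : Finset (Fin n)) :
    ∑ j ∈ S, (∏ i ∈ S.filter (fun i => i < j), pr i) * (1 - pr j)
      = 1 - ∏ j ∈ S, pr j := by
  induction S using Finset.induction_on_max with
  | empty => simp
  | insert a s ha ih =>
    have hnotmem : a ∉ s := fun h => lt_irrefl a (ha a h)
    rw [Finset.sum_insert hnotmem, Finset.prod_insert hnotmem]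
    have hfa : (insert a s).filter (fun i => i < a) = s := by
      rw [Finset.filter_insert, if_neg (lt_irrefl a)]
      exact Finset.filter_true_of_mem fun x hx => ha x hx
    have hfj : ∀ j ∈ s, (insert a s).filter (fun i => i < j)
        = s.filter (fun i => i < j) := by
      intro j hj
      rw [Finset.filter_insert, if_neg (lt_asymm (ha j hj))]
    rw [hfa, Finset.sum_congr rfl (fun j hj => by rw [hfj j hj]), ih]
    ring

lemma prefix_eq {n : ℕ} (pr : Fin n → ℝ) (m : ℕ) :
    ∑ j ∈ univ.filter (fun j : Fin n => (j : ℕ) < m),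
      (∏ i ∈ Finset.Iio j, pr i) * (1 - pr j)
      = 1 - ∏ j ∈ univ.filter (fun j : Fin n => (j : ℕ) < m), pr j := by
  rw [← telesc pr]
  apply Finset.sum_congr rfl
  intro j hj
  simp only [Finset.mem_filter, Finset.mem_univ, true_and] at hj
  congr 2
  ext i
  simp only [Finset.mem_filter, Finset.mem_Iio, Finset.mem_univ, true_and]
  constructor
  · intro h
    exact ⟨lt_trans (by exact_mod_cast h) hj, h⟩
  · rintro ⟨_, h⟩; exact h

lemma hseg {n : ℕ} (g : Fin n → ℝ) (m : ℕ) (hm : m ≤ n) :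
    ∑ i ∈ Finset.range m, extz g i
      = ∑ j ∈ univ.filter (fun j : Fin n => (j : ℕ) < m), g j := by
  have h1 : Finset.range m = (Finset.range n).filter (fun i => i < m) := by
    ext i; simp only [Finset.mem_range, Finset.mem_filter]; omega
  rw [h1, Finset.sum_filter,
    ← Fin.sum_univ_eq_sum_range (fun i => if i < m then extz g i else 0) n,
    Finset.sum_filter]
  apply Finset.sum_congr rfl
  intro j _
  by_cases hjm : (j : ℕ) < m
  · simp [hjm]
  · simp [hjm]

/-- UJSP as maximization over the polymatroid of `f(S) = 1 − ∏_{j∈S} π_j`: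
the vector `x*_j = (∏_{i<j} π_i)(1 − π_j)` is feasible, it maximizes
`Σ_j Z_j x_j` over the polymatroid, and its objective value equals
`Σ_j r_j ∏_{i≤j} π_i = R({1,…,n})`. -/
theorem ujsp_polymatroid (n : ℕ) (pr r : Fin n → ℝ)
    (hpr : ∀ j, 0 ≤ pr j ∧ pr j < 1) (hr : ∀ j, 0 ≤ r j)
    (hZ : ∀ i j : Fin n, i ≤ j →
      pr j * r j / (1 - pr j) ≤ pr i * r i / (1 - pr i)) :
    (∀ S : Finset (Fin n),
        ∑ j ∈ S, (∏ i ∈ Finset.Iio j, pr i) * (1 - pr j) ≤ 1 - ∏ j ∈ S, pr j) ∧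
    (∀ x : Fin n → ℝ, (∀ j, 0 ≤ x j) →
        (∀ S : Finset (Fin n), ∑ j ∈ S, x j ≤ 1 - ∏ j ∈ S, pr j) →
        ∑ j, (pr j * r j / (1 - pr j)) * x j ≤
          ∑ j, (pr j * r j / (1 - pr j)) * ((∏ i ∈ Finset.Iio j, pr i) * (1 - pr j))) ∧
    (∑ j, (pr j * r j / (1 - pr j)) * ((∏ i ∈ Finset.Iio j, pr i) * (1 - pr j)) =
        ∑ j, r j * ∏ i ∈ Finset.Iic j, pr i) ∧
    (∑ j, r j * ∏ i ∈ Finset.Iic j, pr i = Rexp pr r Finset.univ) := by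
  refine ⟨?_, ?_, ?_, ?_⟩
  · -- feasibility of x*
    intro S
    calc ∑ j ∈ S, (∏ i ∈ Finset.Iio j, pr i) * (1 - pr j)
        ≤ ∑ j ∈ S, (∏ i ∈ S.filter (fun i => i < j), pr i) * (1 - pr j) := by
          apply Finset.sum_le_sum
          intro j hj
          apply mul_le_mul_of_nonneg_right
          · apply prod_anti_subset pr hpr
            intro i hi
            simp only [Finset.mem_filter] at hi
            simpa using hi.2
          · linarith [(hpr j).2]
      _ = 1 - ∏ j ∈ S, pr j := telesc pr S
  · -- optimality
    intro x hx0 hx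
    set Z : Fin n → ℝ := fun j => pr j * r j / (1 - pr j) with hZdef
    set y : Fin n → ℝ := fun j => (∏ i ∈ Finset.Iio j, pr i) * (1 - pr j) with hydef
    have hZnn : ∀ j, 0 ≤ Z j := fun j =>
      div_nonneg (mul_nonneg (hpr j).1 (hr j)) (by linarith [(hpr j).2])
    have hSxy : ∀ m ≤ n, ∑ i ∈ Finset.range m, extz x i ≤ ∑ i ∈ Finset.range m, extz y i := by
      intro m hm
      rw [hseg x m hm, hseg y m hm, hydef, prefix_eq pr m]
      exact hx _
    have hconv : ∀ g : Fin n → ℝ,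
        ∑ j, Z j * g j = ∑ i ∈ Finset.range n, extz Z i * extz g i := by
      intro g
      rw [← Fin.sum_univ_eq_sum_range (fun i => extz Z i * extz g i) n]
      exact Finset.sum_congr rfl (fun j _ => by simp)
    rw [show (∑ j, (pr j * r j / (1 - pr j)) * x j) = ∑ j, Z j * x j from rfl,
      show (∑ j, (pr j * r j / (1 - pr j)) * ((∏ i ∈ Finset.Iio j, pr i) * (1 - pr j)))
        = ∑ j, Z j * y j from rfl, hconv x, hconv y]
    have hby : ∀ g : ℕ → ℝ, ∑ i ∈ Finset.range n, extz Z i * g i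
        = extz Z (n-1) * (∑ i ∈ Finset.range n, g i)
          - ∑ i ∈ Finset.range (n-1), (extz Z (i+1) - extz Z i) * ∑ j ∈ Finset.range (i+1), g j := by
      intro g
      simpa [smul_eq_mul] using Finset.sum_range_by_parts (extz Z) g n
    rw [hby (extz x), hby (extz y)]
    apply sub_le_sub
    · apply mul_le_mul_of_nonneg_left (hSxy n le_rfl)
      unfold extz
      split
      · exact hZnn _
      · exact le_rfl
    · apply Finset.sum_le_sum
      intro i hi
      simp only [Finset.mem_range] at hi
      have hi1 : i + 1 < n := by omega
      have hi0 : i < n := by omega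
      apply mul_le_mul_of_nonpos_left (hSxy (i+1) (by omega))
      have h2 : Z ⟨i+1, hi1⟩ ≤ Z ⟨i, hi0⟩ := hZ ⟨i, hi0⟩ ⟨i+1, hi1⟩ (by simp [Fin.le_def])
      simp only [extz, dif_pos hi1, dif_pos hi0]
      exact sub_nonpos.mpr h2
  · -- value equality
    apply Finset.sum_congr rfl
    intro j _
    have h1 : (1 : ℝ) - pr j ≠ 0 := by have := (hpr j).2; intro h; linarith
    rw [← Finset.Iio_insert, Finset.prod_insert (by simp)]
    field_simp
  · -- Rexp
    unfold Rexp
    apply Finset.sum_congr rfl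
    intro j _
    congr 1
    apply Finset.prod_congr _ (fun _ _ => rfl)
    ext i
    simp
end

section
/- If all jobs in a finite set S have the same Z-index, i.e., there is a constant C ≥ 0 with π_j r_j = C(1 − π_j) for every j ∈ S, then the expected reward is the same for every ordering of S and equals R(S,σ) = C·(1 − ∏_{j∈S} π_j) for every ordering σ of the elements of S. -/
/-- If all jobs have the same Z-index, i.e. `π_j r_j = C (1 − π_j)` for every job
with a constant `C ≥ 0`, then the expected reward is the same for every ordering,
namely `C · (1 − ∏_j π_j)`. -/
theorem equal_Z_reward {m : ℕ} (pr r : Fin m → ℝ)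
    (hpr : ∀ j, 0 ≤ pr j ∧ pr j < 1) (hr : ∀ j, 0 ≤ r j)
    (C : ℝ) (hC : 0 ≤ C) (hZ : ∀ j, pr j * r j = C * (1 - pr j))
    (σ : Equiv.Perm (Fin m)) :
    expReward pr r σ = C * (1 - ∏ j, pr j) := by
  set f : ℕ → ℝ := fun n => ∏ i ∈ Finset.univ.filter (fun i : Fin m => (i : ℕ) < n), pr (σ i)
    with hf
  have hIio : ∀ k : Fin m,
      Finset.Iio k = Finset.univ.filter (fun i : Fin m => (i : ℕ) < (k : ℕ)) := by
    intro k; ext i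
    simp only [Finset.mem_Iio, Finset.mem_filter, Finset.mem_univ, true_and, Fin.lt_def]
  have hIic : ∀ k : Fin m,
      Finset.Iic k = Finset.univ.filter (fun i : Fin m => (i : ℕ) < (k : ℕ) + 1) := by
    intro k; ext i
    simp only [Finset.mem_Iic, Finset.mem_filter, Finset.mem_univ, true_and, Fin.le_def,
      Nat.lt_succ_iff]
  have key : ∀ k : Fin m,
      r (σ k) * ∏ i ∈ Finset.Iic k, pr (σ i)
        = C * (∏ i ∈ Finset.Iio k, pr (σ i) - ∏ i ∈ Finset.Iic k, pr (σ i)) := by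
    intro k
    have h1 : Finset.Iic k = insert k (Finset.Iio k) := (Finset.Iio_insert k).symm
    rw [h1, Finset.prod_insert (by simp : k ∉ Finset.Iio k)]
    linear_combination (∏ i ∈ Finset.Iio k, pr (σ i)) * hZ (σ k)
  have hsum : expReward pr r σ = ∑ k ∈ Finset.range m, C * (f k - f (k + 1)) := by
    rw [expReward, ← Fin.sum_univ_eq_sum_range (fun n => C * (f n - f (n + 1))) m]
    refine Finset.sum_congr rfl fun k _ => ?_
    rw [key k]
    have e1 : f (k : ℕ) = ∏ i ∈ Finset.Iio k, pr (σ i) := by rw [hf]; rw [hIio k]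
    have e2 : f ((k : ℕ) + 1) = ∏ i ∈ Finset.Iic k, pr (σ i) := by rw [hf]; rw [hIic k]
    rw [e1, e2]
  rw [hsum, ← Finset.mul_sum, Finset.sum_range_sub' (fun n => f n)]
  have hf0 : f 0 = 1 := by simp [hf]
  have hfm : f m = ∏ j, pr j := by
    have huniv : Finset.univ.filter (fun i : Fin m => (i : ℕ) < m) = Finset.univ := by
      ext i; simp [i.is_lt]
    show ∏ i ∈ Finset.univ.filter (fun i : Fin m => (i : ℕ) < m), pr (σ i) = _
    rw [huniv]
    exact Equiv.prod_comp σ pr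
  rw [hf0, hfm]
end

section
/- Let a_1,…,a_n be integers with a_j ≥ 2 for all j, and let W = ∏_{j=1}^n a_j. Then there exists a subset S ⊆ {1,…,n} such that Σ_{j∈S} ln a_j + √W · ∏_{j∈S} (1/a_j) ≤ 1 + ln √W if and only if there exists a subset S ⊆ {1,…,n} with ∏_{j∈S} a_j = ∏_{j∉S} a_j (equivalently, ∏_{j∈S} a_j = √W). Moreover, when such an S exists the inequality holds with equality. -/
/-- Core of the reduction from the Product Partition Problem to UJSSP: for
integers `a_j ≥ 2` with `W = ∏_j a_j`, there exists `S` with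
`Σ_{j∈S} ln a_j + √W ∏_{j∈S} 1/a_j ≤ 1 + ln √W` iff there is a subset `S` with
`∏_{j∈S} a_j = ∏_{j∉S} a_j`; moreover when such an `S` exists the inequality
holds with equality. -/
theorem ppp_reduction (n : ℕ) (a : Fin n → ℕ) (ha : ∀ j, 2 ≤ a j)
    (W : ℕ) (hW : W = ∏ j, a j) :
    ((∃ S : Finset (Fin n),
        ∑ j ∈ S, Real.log (a j) + Real.sqrt W * ∏ j ∈ S, (1 / (a j : ℝ)) ≤
          1 + Real.log (Real.sqrt W)) ↔
      ∃ S : Finset (Fin n), ∏ j ∈ S, a j = ∏ j ∈ Sᶜ, a j) ∧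
    (∀ S : Finset (Fin n), ∏ j ∈ S, a j = ∏ j ∈ Sᶜ, a j →
      ∑ j ∈ S, Real.log (a j) + Real.sqrt W * ∏ j ∈ S, (1 / (a j : ℝ)) =
        1 + Real.log (Real.sqrt W)) := by
  have haR : ∀ j, (0:ℝ) < a j := fun j => by
    have := ha j; positivity
  have hWpos : 0 < W := by
    rw [hW]; exact Finset.prod_pos (fun j _ => lt_of_lt_of_le two_pos (ha j))
  have hWR : (0:ℝ) < W := by exact_mod_cast hWpos
  have hsq : 0 < Real.sqrt W := Real.sqrt_pos.mpr hWR
  have hP : ∀ S : Finset (Fin n), (0:ℝ) < ∏ j ∈ S, (a j : ℝ) :=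
    fun S => Finset.prod_pos (fun j _ => haR j)
  have hsum : ∀ S : Finset (Fin n),
      ∑ j ∈ S, Real.log (a j) = Real.log (∏ j ∈ S, (a j : ℝ)) :=
    fun S => (Real.log_prod (fun j _ => (haR j).ne')).symm
  have hprodinv : ∀ S : Finset (Fin n),
      (∏ j ∈ S, (1 / (a j : ℝ))) = (∏ j ∈ S, (a j : ℝ))⁻¹ := by
    intro S
    rw [← Finset.prod_inv_distrib]
    simp [one_div]
  have hcast : ∀ S : Finset (Fin n),
      ((∏ j ∈ S, a j : ℕ) : ℝ) = ∏ j ∈ S, (a j : ℝ) := by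
    intro S; push_cast; rfl
  have heq : ∀ S : Finset (Fin n), ∏ j ∈ S, a j = ∏ j ∈ Sᶜ, a j →
      ∑ j ∈ S, Real.log (a j) + Real.sqrt W * ∏ j ∈ S, (1 / (a j : ℝ)) =
        1 + Real.log (Real.sqrt W) := by
    intro S hS
    have hWprod : (∏ j ∈ S, a j) * (∏ j ∈ Sᶜ, a j) = W := by
      rw [hW, Finset.prod_mul_prod_compl]
    have hW2 : W = (∏ j ∈ S, a j) * (∏ j ∈ S, a j) := by
      rw [← hWprod, hS]
    have hsqrt : Real.sqrt W = ∏ j ∈ S, (a j : ℝ) := by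
      rw [hW2]
      push_cast
      rw [Real.sqrt_mul_self (le_of_lt (hP S))]
    rw [hsum, hprodinv, hsqrt, mul_inv_cancel₀ (hP S).ne']
    ring
  refine ⟨⟨?_, fun ⟨S, hS⟩ => ⟨S, (heq S hS).le⟩⟩, heq⟩
  rintro ⟨S, hS⟩
  refine ⟨S, ?_⟩
  rw [hsum, hprodinv] at hS
  set P := ∏ j ∈ S, (a j : ℝ) with hPdef
  have hPpos := hP S
  -- √W = P
  have hsqeq : Real.sqrt W = P := by
    by_contra hne
    have hxpos : 0 < Real.sqrt W / P := div_pos hsq hPpos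
    have hxne : Real.sqrt W / P ≠ 1 := by
      intro h
      exact hne ((div_eq_one_iff_eq (b := P) hPpos.ne').mp h)
    have hlt := Real.log_lt_sub_one_of_pos hxpos hxne
    rw [Real.log_div hsq.ne' hPpos.ne'] at hlt
    have : Real.sqrt W / P = Real.sqrt W * P⁻¹ := by ring
    rw [this] at hlt
    linarith
  -- conclude on naturals
  have hWprod : (∏ j ∈ S, a j) * (∏ j ∈ Sᶜ, a j) = W := by
    rw [hW, Finset.prod_mul_prod_compl]
  have hPP : P * P = (W : ℝ) := by
    rw [← hsqeq, Real.mul_self_sqrt hWR.le]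
  have hnat : (∏ j ∈ S, a j) * (∏ j ∈ S, a j) = W := by
    have : (((∏ j ∈ S, a j) * (∏ j ∈ S, a j) : ℕ) : ℝ) = (W : ℝ) := by
      push_cast
      exact hPP
    exact_mod_cast this
  have hpos : 0 < ∏ j ∈ S, a j :=
    Finset.prod_pos (fun j _ => lt_of_lt_of_le two_pos (ha j))
  exact (Nat.eq_of_mul_eq_mul_left hpos (by rw [hWprod, hnat])).symm
end

section
/- Suppose all jobs have the same expected reward: π_j r_j = k for all j = 1,…,n, where k > 0, π_j ∈ (0,1), r_j > 0, and jobs are indexed so that π_1 ≥ π_2 ≥ ⋯ ≥ π_n (equivalently, by non-increasing Z-index). Let S = {j_1 < j_2 < ⋯ < j_m} be a nonempty subset with z(S) ≥ z(S') for every S' ⊆ {1,…,n}. Then: (1) if μ is the unique cost minimizer, i.e., c_μ < c_j for every j ≠ μ, then μ ∈ S; and (2) for every i ∈ {1,…,m−1}, if ν is the unique cost minimizer among indices larger than j_i, i.e., ν > j_i and c_ν < c_j for every j > j_i with j ≠ ν, then ν ∈ S. -/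
lemma exchange_reward {n : ℕ} (pr r : Fin n → ℝ) (k : ℝ)
    (hpr : ∀ j, 0 < pr j) (hr : ∀ j, 0 < r j)
    (hke : ∀ j, pr j * r j = k)
    (S : Finset (Fin n)) (t ν : Fin n) (ht : t ∈ S) (hν : ν ∉ S)
    (hsep : ∀ s ∈ S, s ≠ t → (s < ν ↔ s < t))
    (hπ : ∀ s ∈ S, t < s → pr t ≤ pr ν) :
    Rexp pr r S ≤ Rexp pr r (insert ν (S.erase t)) := by
  classical
  set S' := insert ν (S.erase t) with hS'def
  have hνe : ν ∉ S.erase t := fun h => hν (Finset.mem_of_mem_erase h)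
  have htν : t ≠ ν := fun h => hν (h ▸ ht)
  -- decompose
  have hRS : Rexp pr r S = r t * ∏ i ∈ S.filter (fun i => i ≤ t), pr i
      + ∑ j ∈ S.erase t, r j * ∏ i ∈ S.filter (fun i => i ≤ j), pr i := by
    rw [Rexp, ← Finset.add_sum_erase _ _ ht]
  have hRS' : Rexp pr r S' = r ν * ∏ i ∈ S'.filter (fun i => i ≤ ν), pr i
      + ∑ j ∈ S.erase t, r j * ∏ i ∈ S'.filter (fun i => i ≤ j), pr i := by
    rw [Rexp, hS'def, Finset.sum_insert hνe]
  -- head terms are equal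
  have hfiltlt : S'.filter (fun i => i < ν) = S.filter (fun i => i < t) := by
    ext i
    simp only [hS'def, Finset.mem_filter, Finset.mem_insert, Finset.mem_erase]
    constructor
    · rintro ⟨hi1 | ⟨hi2, hi3⟩, hi4⟩
      · exact absurd (hi1 ▸ hi4) (lt_irrefl _)
      · exact ⟨hi3, (hsep i hi3 hi2).mp hi4⟩
    · rintro ⟨hi1, hi2⟩
      have hne : i ≠ t := ne_of_lt hi2
      exact ⟨Or.inr ⟨hne, hi1⟩, (hsep i hi1 hne).mpr hi2⟩
  have head_eq : r t * ∏ i ∈ S.filter (fun i => i ≤ t), pr i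
      = r ν * ∏ i ∈ S'.filter (fun i => i ≤ ν), pr i := by
    have h1 : S.filter (fun i => i ≤ t) = insert t (S.filter (fun i => i < t)) := by
      ext i
      simp only [Finset.mem_filter, Finset.mem_insert]
      constructor
      · rintro ⟨hi1, hi2⟩
        rcases lt_or_eq_of_le hi2 with h | h
        · exact Or.inr ⟨hi1, h⟩
        · exact Or.inl h
      · rintro (h | ⟨hi1, hi2⟩)
        · exact ⟨h ▸ ht, le_of_eq h⟩
        · exact ⟨hi1, le_of_lt hi2⟩
    have h2 : S'.filter (fun i => i ≤ ν) = insert ν (S.filter (fun i => i < t)) := by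
      rw [← hfiltlt]
      ext i
      simp only [Finset.mem_filter, Finset.mem_insert]
      constructor
      · rintro ⟨hi1, hi2⟩
        rcases lt_or_eq_of_le hi2 with h | h
        · exact Or.inr ⟨hi1, h⟩
        · exact Or.inl h
      · rintro (h | ⟨hi1, hi2⟩)
        · refine ⟨h ▸ ?_, le_of_eq h⟩
          simp [hS'def]
        · exact ⟨hi1, le_of_lt hi2⟩
    have hnt : t ∉ S.filter (fun i => i < t) := by simp
    have hnν : ν ∉ S.filter (fun i => i < t) := by
      simp only [Finset.mem_filter, not_and]
      intro hν'; exact absurd hν' hν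
    rw [h1, h2, Finset.prod_insert hnt, Finset.prod_insert hnν,
      ← mul_assoc, ← mul_assoc, mul_comm (r t) (pr t), mul_comm (r ν) (pr ν),
      hke t, hke ν]
  rw [hRS, hRS', head_eq]
  refine add_le_add (le_refl _) (Finset.sum_le_sum ?_)
  intro j hj
  obtain ⟨hjt, hjS⟩ := Finset.mem_erase.mp hj
  by_cases hlt : j < t
  · have hjν : j < ν := (hsep j hjS hjt).mpr hlt
    have e1 : S.filter (fun i => i ≤ j) = (S.erase t).filter (fun i => i ≤ j) := by
      ext i
      simp only [Finset.mem_filter, Finset.mem_erase]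
      constructor
      · rintro ⟨hi1, hi2⟩
        refine ⟨⟨fun h => ?_, hi1⟩, hi2⟩
        exact absurd (h ▸ hi2) (not_le_of_gt hlt)
      · rintro ⟨⟨_, hi1⟩, hi2⟩; exact ⟨hi1, hi2⟩
    have e2 : S'.filter (fun i => i ≤ j) = (S.erase t).filter (fun i => i ≤ j) := by
      ext i
      simp only [hS'def, Finset.mem_filter, Finset.mem_insert]
      constructor
      · rintro ⟨hi1 | hi1, hi2⟩
        · exact absurd (hi1 ▸ hi2) (not_le_of_gt hjν)
        · exact ⟨hi1, hi2⟩
      · rintro ⟨hi1, hi2⟩; exact ⟨Or.inr hi1, hi2⟩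
    rw [e1, e2]
  · have htj : t < j := lt_of_le_of_ne (le_of_not_gt hlt) (Ne.symm hjt)
    have hνj : ν < j := by
      have h1 : ¬ j < ν := fun h => hlt ((hsep j hjS hjt).mp h)
      have h2 : j ≠ ν := fun h => hν (h ▸ hjS)
      exact lt_of_le_of_ne (le_of_not_gt h1) (Ne.symm h2)
    have hQ : (0:ℝ) < ∏ i ∈ (S.erase t).filter (fun i => i ≤ j), pr i :=
      Finset.prod_pos (fun i _ => hpr i)
    have e1 : S.filter (fun i => i ≤ j)
        = insert t ((S.erase t).filter (fun i => i ≤ j)) := by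
      ext i
      simp only [Finset.mem_filter, Finset.mem_insert, Finset.mem_erase]
      constructor
      · rintro ⟨hi1, hi2⟩
        by_cases h : i = t
        · exact Or.inl h
        · exact Or.inr ⟨⟨h, hi1⟩, hi2⟩
      · rintro (h | ⟨⟨_, hi1⟩, hi2⟩)
        · exact ⟨h ▸ ht, h ▸ le_of_lt htj⟩
        · exact ⟨hi1, hi2⟩
    have e2 : S'.filter (fun i => i ≤ j)
        = insert ν ((S.erase t).filter (fun i => i ≤ j)) := by
      ext i
      simp only [hS'def, Finset.mem_filter, Finset.mem_insert]
      constructor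
      · rintro ⟨hi1 | hi1, hi2⟩
        · exact Or.inl hi1
        · exact Or.inr ⟨hi1, hi2⟩
      · rintro (h | ⟨hi1, hi2⟩)
        · exact ⟨Or.inl h, h ▸ le_of_lt hνj⟩
        · exact ⟨Or.inr hi1, hi2⟩
    have hnt : t ∉ (S.erase t).filter (fun i => i ≤ j) := by simp
    have hnν : ν ∉ (S.erase t).filter (fun i => i ≤ j) := by
      simp only [Finset.mem_filter, not_and]
      intro h; exact absurd (Finset.mem_of_mem_erase h) hν
    rw [e1, e2, Finset.prod_insert hnt, Finset.prod_insert hnν]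
    have hprle : pr t ≤ pr ν := hπ j hjS htj
    have h1 := mul_le_mul_of_nonneg_right hprle (le_of_lt hQ)
    exact mul_le_mul_of_nonneg_left h1 (le_of_lt (hr j))

lemma exchange_contra {n : ℕ} (pr r c : Fin n → ℝ) (k : ℝ)
    (hpr : ∀ j, 0 < pr j) (hr : ∀ j, 0 < r j)
    (hke : ∀ j, pr j * r j = k)
    (S : Finset (Fin n)) (t ν : Fin n) (ht : t ∈ S) (hν : ν ∉ S)
    (hsep : ∀ s ∈ S, s ≠ t → (s < ν ↔ s < t))
    (hπ : ∀ s ∈ S, t < s → pr t ≤ pr ν)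
    (hcost : c ν < c t)
    (hopt : ∀ S' : Finset (Fin n), netz pr r c S' ≤ netz pr r c S) : False := by
  classical
  have hνe : ν ∉ S.erase t := fun h => hν (Finset.mem_of_mem_erase h)
  have hR := exchange_reward pr r k hpr hr hke S t ν ht hν hsep hπ
  have hcst : cst c (insert ν (S.erase t)) = c ν + (cst c S - c t) := by
    rw [cst, Finset.sum_insert hνe, Finset.sum_erase_eq_sub ht]; rfl
  have h1 := hopt (insert ν (S.erase t))
  rw [netz, netz, hcst] at h1
  linarith

/-- When all jobs have the same expected reward `π_j r_j = k > 0` and are indexed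
by non-increasing probability, any optimal nonempty set `S` must contain the
unique overall cost minimizer, and, for every non-maximal element `a` of `S`, the
unique cost minimizer among indices larger than `a`. -/
theorem equal_expected_reward_structure (n : ℕ) (pr r c : Fin n → ℝ)
    (k : ℝ) (hk : 0 < k)
    (hpr : ∀ j, 0 < pr j ∧ pr j < 1) (hr : ∀ j, 0 < r j) (hc : ∀ j, 0 ≤ c j)
    (hke : ∀ j, pr j * r j = k)
    (hmono : ∀ i j : Fin n, i ≤ j → pr j ≤ pr i)
    (S : Finset (Fin n)) (hS : S.Nonempty)
    (hopt : ∀ S' : Finset (Fin n), netz pr r c S' ≤ netz pr r c S) :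
    (∀ μ : Fin n, (∀ j : Fin n, j ≠ μ → c μ < c j) → μ ∈ S) ∧
    (∀ a ∈ S, (∃ b ∈ S, a < b) →
      ∀ ν : Fin n, a < ν → (∀ j : Fin n, a < j → j ≠ ν → c ν < c j) → ν ∈ S) := by
  classical
  have hpr' : ∀ j, 0 < pr j := fun j => (hpr j).1
  constructor
  · intro μ hμ
    by_contra hmem
    by_cases hT : (S.filter (fun s => μ < s)).Nonempty
    · set t := (S.filter (fun s => μ < s)).min' hT with htdef
      have htm := (S.filter (fun s => μ < s)).min'_mem hT
      rw [Finset.mem_filter] at htm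
      obtain ⟨htS, hμt⟩ := htm
      refine exchange_contra pr r c k hpr' hr hke S t μ htS hmem ?_ ?_ ?_ hopt
      · intro s hsS hst
        constructor
        · intro h; exact lt_trans h hμt
        · intro h
          by_contra h2
          have hμs : μ < s := lt_of_le_of_ne (le_of_not_gt h2)
            (fun he => hmem (he ▸ hsS))
          have := Finset.min'_le _ s (Finset.mem_filter.mpr ⟨hsS, hμs⟩)
          exact absurd h (not_lt_of_ge this)
      · intro s _ _; exact hmono μ t (le_of_lt hμt)
      · exact hμ t (ne_of_lt hμt).symm
    · set t := S.max' hS with htdef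
      have htS := S.max'_mem hS
      have hall : ∀ s ∈ S, s < μ := by
        intro s hsS
        have h1 : ¬ μ < s := fun h =>
          hT ⟨s, Finset.mem_filter.mpr ⟨hsS, h⟩⟩
        exact lt_of_le_of_ne (le_of_not_gt h1) (fun he => hmem (he ▸ hsS))
      refine exchange_contra pr r c k hpr' hr hke S t μ htS hmem ?_ ?_ ?_ hopt
      · intro s hsS hst
        constructor
        · intro _; exact lt_of_le_of_ne (S.le_max' s hsS) hst
        · intro _; exact hall s hsS
      · intro s hsS hts
        exact absurd (S.le_max' s hsS) (not_le_of_gt hts)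
      · exact hμ t (fun he => hmem (he ▸ htS))
  · rintro a ha ⟨b, hb, hab⟩ ν haν hν
    by_contra hmem
    by_cases hT : (S.filter (fun s => ν < s)).Nonempty
    · set t := (S.filter (fun s => ν < s)).min' hT with htdef
      have htm := (S.filter (fun s => ν < s)).min'_mem hT
      rw [Finset.mem_filter] at htm
      obtain ⟨htS, hνt⟩ := htm
      refine exchange_contra pr r c k hpr' hr hke S t ν htS hmem ?_ ?_ ?_ hopt
      · intro s hsS hst
        constructor
        · intro h; exact lt_trans h hνt
        · intro h
          by_contra h2
          have hνs : ν < s := lt_of_le_of_ne (le_of_not_gt h2)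
            (fun he => hmem (he ▸ hsS))
          have := Finset.min'_le _ s (Finset.mem_filter.mpr ⟨hsS, hνs⟩)
          exact absurd h (not_lt_of_ge this)
      · intro s _ _; exact hmono ν t (le_of_lt hνt)
      · exact hν t (lt_trans haν hνt) (ne_of_lt hνt).symm
    · set t := S.max' hS with htdef
      have htS := S.max'_mem hS
      have hall : ∀ s ∈ S, s < ν := by
        intro s hsS
        have h1 : ¬ ν < s := fun h =>
          hT ⟨s, Finset.mem_filter.mpr ⟨hsS, h⟩⟩
        exact lt_of_le_of_ne (le_of_not_gt h1) (fun he => hmem (he ▸ hsS))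
      refine exchange_contra pr r c k hpr' hr hke S t ν htS hmem ?_ ?_ ?_ hopt
      · intro s hsS hst
        constructor
        · intro _; exact lt_of_le_of_ne (S.le_max' s hsS) hst
        · intro _; exact hall s hsS
      · intro s hsS hts
        exact absurd (S.le_max' s hsS) (not_le_of_gt hts)
      · exact hν t (lt_of_lt_of_le hab (S.le_max' b hb)) (fun he => hmem (he ▸ htS))
end

section
/- Forward optimality condition: let S* ⊆ {1,…,n} satisfy z(S*) ≥ z(S) for every S ⊆ {1,…,n}. For T ⊆ {1,…,n} and r ∈ ℝ define F(T, r) = R(T) − c(T) + (∏_{i∈T} π_i)·r. Then for every j ∈ {0,1,…,n} and every T ⊆ {1,…,j}, F(S* ∩ {1,…,j}, R(S* ∩ {j+1,…,n})) ≥ F(T, R(S* ∩ {j+1,…,n})). -/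
/-- Forward parameterized profit function
`F(T, r) = R(T) − c(T) + (∏_{i∈T} π_i)·r`. -/
def Ffun {n : ℕ} (pr r c : Fin n → ℝ) (T : Finset (Fin n)) (x : ℝ) : ℝ :=
  Rexp pr r T - cst c T + (∏ i ∈ T, pr i) * x

lemma disj_of_lt {n : ℕ} {A B : Finset (Fin n)} (h : ∀ a ∈ A, ∀ b ∈ B, a < b) :
    Disjoint A B := by
  rw [Finset.disjoint_left]
  intro x hxA hxB
  exact lt_irrefl x (h x hxA x hxB)

lemma Rexp_union {n : ℕ} (pr r : Fin n → ℝ) (A B : Finset (Fin n))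
    (h : ∀ a ∈ A, ∀ b ∈ B, a < b) :
    Rexp pr r (A ∪ B) = Rexp pr r A + (∏ i ∈ A, pr i) * Rexp pr r B := by
  have hd := disj_of_lt h
  unfold Rexp
  rw [Finset.sum_union hd, Finset.mul_sum]
  congr 1
  · apply Finset.sum_congr rfl
    intro a ha
    congr 1
    rw [Finset.filter_union]
    have : B.filter (fun i => i ≤ a) = ∅ := by
      rw [Finset.filter_eq_empty_iff]
      intro b hb
      exact not_le_of_gt (h a ha b hb)
    rw [this, Finset.union_empty]
  · apply Finset.sum_congr rfl
    intro b hb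
    rw [Finset.filter_union]
    have hA : A.filter (fun i => i ≤ b) = A := by
      rw [Finset.filter_eq_self]
      intro a ha
      exact le_of_lt (h a ha b hb)
    rw [hA, Finset.prod_union (hd.mono (le_refl A) (Finset.filter_subset _ B))]
    ring

lemma cst_union {n : ℕ} (c : Fin n → ℝ) (A B : Finset (Fin n)) (hd : Disjoint A B) :
    cst c (A ∪ B) = cst c A + cst c B := Finset.sum_union hd

/-- Forward optimality condition: if `S*` is optimal then, for every `j` and every
`T ⊆ {1,…,j}`, `F(S*_{≤j}, R(S*_{>j})) ≥ F(T, R(S*_{>j}))`. Jobs are numbered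
`1,…,n`, with job `t` corresponding to the index `i : Fin n` with `i.val + 1 = t`,
so `{1,…,j}` is `{i : i.val < j}`. -/
theorem forward_optimality (n : ℕ) (pr r c : Fin n → ℝ)
    (hpr : ∀ j, 0 ≤ pr j ∧ pr j < 1) (hr : ∀ j, 0 ≤ r j) (hc : ∀ j, 0 ≤ c j)
    (Sstar : Finset (Fin n))
    (hopt : ∀ S : Finset (Fin n), netz pr r c S ≤ netz pr r c Sstar)
    (j : ℕ) (hj : j ≤ n)
    (T : Finset (Fin n)) (hT : ∀ i ∈ T, i.val < j) :
    Ffun pr r c T (Rexp pr r (Sstar.filter (fun i => j ≤ i.val))) ≤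
      Ffun pr r c (Sstar.filter (fun i => i.val < j))
        (Rexp pr r (Sstar.filter (fun i => j ≤ i.val))) := by
  set A := Sstar.filter (fun i => i.val < j) with hA
  set B := Sstar.filter (fun i => j ≤ i.val) with hB
  have hABlt : ∀ a ∈ A, ∀ b ∈ B, a < b := by
    intro a ha b hb
    have h1 := (Finset.mem_filter.mp ha).2
    have h2 := (Finset.mem_filter.mp hb).2
    exact Fin.lt_def.mpr (lt_of_lt_of_le h1 h2)
  have hTBlt : ∀ a ∈ T, ∀ b ∈ B, a < b := by
    intro a ha b hb
    have h2 := (Finset.mem_filter.mp hb).2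
    exact Fin.lt_def.mpr (lt_of_lt_of_le (hT a ha) h2)
  have hS : Sstar = A ∪ B := by
    ext x
    simp only [hA, hB, Finset.mem_union, Finset.mem_filter]
    constructor
    · intro hx
      rcases lt_or_ge x.val j with h | h
      · exact Or.inl ⟨hx, h⟩
      · exact Or.inr ⟨hx, h⟩
    · rintro (⟨hx, _⟩ | ⟨hx, _⟩) <;> exact hx
  have key := hopt (T ∪ B)
  unfold netz at key
  rw [Rexp_union pr r T B hTBlt, cst_union c T B (disj_of_lt hTBlt)] at key
  conv at key => rw [hS]
  rw [Rexp_union pr r A B hABlt, cst_union c A B (disj_of_lt hABlt)] at key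
  unfold Ffun
  linarith
end

section
/- If jobs are indexed in non-increasing Z order (Z_1 ≥ Z_2 ≥ ⋯ ≥ Z_n), then the expected reward function is non-negative and monotone non-decreasing: for all S ⊆ T ⊆ {1,…,n}, 0 ≤ R(S) ≤ R(T). -/
open Finset


lemma sum_telescope_le_one' {n : ℕ} (pr : Fin n → ℝ)
    (hpr : ∀ j, 0 ≤ pr j ∧ pr j ≤ 1) (B : Finset (Fin n)) :
    ∑ j ∈ B, (1 - pr j) * ∏ i ∈ B.filter (fun i => i < j), pr i ≤ 1 := by
  induction B using Finset.strongInduction with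
  | _ B ih =>
    rcases B.eq_empty_or_nonempty with rfl | hB
    · simp
    · set m := B.min' hB with hm
      have hmB : m ∈ B := B.min'_mem hB
      rw [← Finset.add_sum_erase _ _ hmB]
      have h1 : B.filter (fun i => i < m) = ∅ := by
        rw [Finset.filter_eq_empty_iff]
        intro i hi
        exact not_lt.2 (B.min'_le i hi)
      rw [h1]
      have h2 : ∀ j ∈ B.erase m,
          B.filter (fun i => i < j) = insert m ((B.erase m).filter (fun i => i < j)) := by
        intro j hj
        ext i
        simp only [mem_filter, mem_insert, mem_erase]
        constructor
        · rintro ⟨hiB, hij⟩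
          by_cases h : i = m
          · exact Or.inl h
          · exact Or.inr ⟨⟨h, hiB⟩, hij⟩
        · rintro (rfl | ⟨⟨_, hiB⟩, hij⟩)
          · refine ⟨hmB, ?_⟩
            rcases lt_or_eq_of_le (B.min'_le j (mem_of_mem_erase hj)) with h | h
            · exact h
            · exact absurd h.symm (ne_of_mem_erase hj)
          · exact ⟨hiB, hij⟩
      have h3 : ∑ j ∈ B.erase m, (1 - pr j) * ∏ i ∈ B.filter (fun i => i < j), pr i
          = pr m * ∑ j ∈ B.erase m,
              (1 - pr j) * ∏ i ∈ (B.erase m).filter (fun i => i < j), pr i := by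
        rw [Finset.mul_sum]
        refine Finset.sum_congr rfl fun j hj => ?_
        rw [h2 j hj, Finset.prod_insert (by simp)]
        ring
      rw [h3, Finset.prod_empty]
      have ih' := ih (B.erase m) (Finset.erase_ssubset hmB)
      have h0m := (hpr m).1
      have h1m := (hpr m).2
      have hsum0 : 0 ≤ ∑ j ∈ B.erase m,
          (1 - pr j) * ∏ i ∈ (B.erase m).filter (fun i => i < j), pr i :=
        Finset.sum_nonneg fun j _ =>
          mul_nonneg (by linarith [(hpr j).2]) (Finset.prod_nonneg fun i _ => (hpr i).1)
      nlinarith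

lemma Rexp_le_insert {n : ℕ} (pr r : Fin n → ℝ)
    (hpr : ∀ j, 0 ≤ pr j ∧ pr j < 1) (hr : ∀ j, 0 ≤ r j)
    (hZ : ∀ i j : Fin n, i ≤ j →
      pr j * r j / (1 - pr j) ≤ pr i * r i / (1 - pr i))
    (S : Finset (Fin n)) (k : Fin n) (hk : k ∉ S) :
    Rexp pr r S ≤ Rexp pr r (insert k S) := by
  classical
  set B := S.filter (fun j => k < j) with hBdef
  set PA := ∏ i ∈ S.filter (fun i => i ≤ k), pr i with hPA
  have hPA0 : 0 ≤ PA := Finset.prod_nonneg fun i _ => (hpr i).1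
  -- expand Rexp (insert k S)
  have hkfilter : (insert k S).filter (fun i => i ≤ k) = insert k (S.filter (fun i => i ≤ k)) := by
    rw [Finset.filter_insert, if_pos le_rfl]
  have hknotin : k ∉ S.filter (fun i => i ≤ k) := fun h => hk (Finset.mem_filter.1 h).1
  have hexp : Rexp pr r (insert k S)
      = r k * (pr k * PA) + ∑ j ∈ S, r j * ∏ i ∈ (insert k S).filter (fun i => i ≤ j), pr i := by
    rw [Rexp, Finset.sum_insert hk, hkfilter, Finset.prod_insert hknotin, hPA]
  -- split the sum over S
  have hsplit : ∀ j ∈ S, (insert k S).filter (fun i => i ≤ j)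
      = if k < j then insert k (S.filter (fun i => i ≤ j)) else S.filter (fun i => i ≤ j) := by
    intro j hj
    by_cases h : k < j
    · rw [if_pos h, Finset.filter_insert, if_pos h.le]
    · rw [if_neg h, Finset.filter_insert, if_neg (fun hle => h (lt_of_le_of_ne hle (fun he => hk (he ▸ hj))))]
  have hsum : ∑ j ∈ S, r j * ∏ i ∈ (insert k S).filter (fun i => i ≤ j), pr i
      = ∑ j ∈ S.filter (fun j => ¬ k < j), r j * ∏ i ∈ S.filter (fun i => i ≤ j), pr i
        + pr k * ∑ j ∈ B, r j * ∏ i ∈ S.filter (fun i => i ≤ j), pr i := by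
    rw [← Finset.sum_filter_add_sum_filter_not S (fun j => k < j)]
    rw [add_comm, Finset.mul_sum]
    congr 1
    · refine Finset.sum_congr rfl fun j hj => ?_
      obtain ⟨hjS, hkj⟩ := Finset.mem_filter.1 hj
      rw [hsplit j hjS, if_neg hkj]
    · refine Finset.sum_congr rfl fun j hj => ?_
      obtain ⟨hjS, hkj⟩ := Finset.mem_filter.1 hj
      rw [hsplit j hjS, if_pos hkj, Finset.prod_insert (fun h => hk (Finset.mem_filter.1 h).1)]
      ring
  have hRS : Rexp pr r S
      = ∑ j ∈ S.filter (fun j => ¬ k < j), r j * ∏ i ∈ S.filter (fun i => i ≤ j), pr i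
        + ∑ j ∈ B, r j * ∏ i ∈ S.filter (fun i => i ≤ j), pr i := by
    rw [Rexp, ← Finset.sum_filter_add_sum_filter_not S (fun j => k < j), add_comm]
  rw [hexp, hsum, hRS]
  have hk1 : pr k < 1 := (hpr k).2
  have hk0 : 0 ≤ pr k := (hpr k).1
  -- key inequality: (1 - pr k) * ∑_B term ≤ r k * pr k * PA
  -- factor each term
  have hfac : ∀ j ∈ B, ∏ i ∈ S.filter (fun i => i ≤ j), pr i
      = PA * (pr j * ∏ i ∈ B.filter (fun i => i < j), pr i) := by
    intro j hj
    obtain ⟨hjS, hkj⟩ := Finset.mem_filter.1 hj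
    have hsplit2 : S.filter (fun i => i ≤ j)
        = (S.filter (fun i => i ≤ k)) ∪ insert j (B.filter (fun i => i < j)) := by
      ext i
      simp only [Finset.mem_filter, Finset.mem_union, Finset.mem_insert, hBdef]
      constructor
      · rintro ⟨hiS, hij⟩
        by_cases h : i ≤ k
        · exact Or.inl ⟨hiS, h⟩
        · rcases lt_or_eq_of_le hij with h' | h'
          · exact Or.inr (Or.inr ⟨⟨hiS, not_le.1 h⟩, h'⟩)
          · exact Or.inr (Or.inl h')
      · rintro (⟨hiS, hik⟩ | rfl | ⟨⟨hiS, _⟩, hij⟩)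
        · exact ⟨hiS, hik.trans hkj.le⟩
        · exact ⟨hjS, le_rfl⟩
        · exact ⟨hiS, hij.le⟩
    have hdisj : Disjoint (S.filter (fun i => i ≤ k)) (insert j (B.filter (fun i => i < j))) := by
      rw [Finset.disjoint_left]
      intro i hi hi2
      obtain ⟨_, hik⟩ := Finset.mem_filter.1 hi
      rcases Finset.mem_insert.1 hi2 with rfl | hi3
      · exact absurd (hik.trans_lt hkj) (lt_irrefl i)
      · obtain ⟨hiB, _⟩ := Finset.mem_filter.1 hi3
        obtain ⟨_, hki⟩ := Finset.mem_filter.1 hiB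
        exact absurd (hik.trans_lt hki) (lt_irrefl i)
    have hjnotin : j ∉ B.filter (fun i => i < j) := fun h => lt_irrefl j (Finset.mem_filter.1 h).2
    rw [hsplit2, Finset.prod_union hdisj, Finset.prod_insert hjnotin, hPA]
  -- per-term bound
  have hterm : ∀ j ∈ B, (1 - pr k) * (r j * ∏ i ∈ S.filter (fun i => i ≤ j), pr i)
      ≤ r k * pr k * PA * ((1 - pr j) * ∏ i ∈ B.filter (fun i => i < j), pr i) := by
    intro j hj
    obtain ⟨hjS, hkj⟩ := Finset.mem_filter.1 hj
    have hZkj := hZ k j hkj.le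
    have hj1 : pr j < 1 := (hpr j).2
    have hj0 : 0 ≤ pr j := (hpr j).1
    have hcross : (1 - pr k) * (pr j * r j) ≤ pr k * r k * (1 - pr j) := by
      rw [div_le_div_iff₀ (by linarith) (by linarith)] at hZkj
      linarith
    have hQ0 : 0 ≤ ∏ i ∈ B.filter (fun i => i < j), pr i :=
      Finset.prod_nonneg fun i _ => (hpr i).1
    rw [hfac j hj]
    calc (1 - pr k) * (r j * (PA * (pr j * ∏ i ∈ B.filter (fun i => i < j), pr i)))
        = ((1 - pr k) * (pr j * r j)) * (PA * ∏ i ∈ B.filter (fun i => i < j), pr i) := by ring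
      _ ≤ (pr k * r k * (1 - pr j)) * (PA * ∏ i ∈ B.filter (fun i => i < j), pr i) := by
          apply mul_le_mul_of_nonneg_right hcross (mul_nonneg hPA0 hQ0)
      _ = r k * pr k * PA * ((1 - pr j) * ∏ i ∈ B.filter (fun i => i < j), pr i) := by ring
  have hsumB : (1 - pr k) * ∑ j ∈ B, r j * ∏ i ∈ S.filter (fun i => i ≤ j), pr i
      ≤ r k * pr k * PA := by
    rw [Finset.mul_sum]
    calc ∑ j ∈ B, (1 - pr k) * (r j * ∏ i ∈ S.filter (fun i => i ≤ j), pr i)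
        ≤ ∑ j ∈ B, r k * pr k * PA * ((1 - pr j) * ∏ i ∈ B.filter (fun i => i < j), pr i) :=
          Finset.sum_le_sum hterm
      _ = r k * pr k * PA * ∑ j ∈ B, (1 - pr j) * ∏ i ∈ B.filter (fun i => i < j), pr i := by
          rw [Finset.mul_sum]
      _ ≤ r k * pr k * PA * 1 := by
          apply mul_le_mul_of_nonneg_left
            (sum_telescope_le_one' pr (fun j => ⟨(hpr j).1, (hpr j).2.le⟩) B)
            (mul_nonneg (mul_nonneg (hr k) hk0) hPA0)
      _ = r k * pr k * PA := mul_one _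
  linarith

/-- The expected reward function is non-negative and monotone non-decreasing:
for `S ⊆ T ⊆ {1,…,n}`, `0 ≤ R(S) ≤ R(T)`. -/
theorem Rexp_nonneg_monotone (n : ℕ) (pr r : Fin n → ℝ)
    (hpr : ∀ j, 0 ≤ pr j ∧ pr j < 1) (hr : ∀ j, 0 ≤ r j)
    (hZ : ∀ i j : Fin n, i ≤ j →
      pr j * r j / (1 - pr j) ≤ pr i * r i / (1 - pr i))
    (S T : Finset (Fin n)) (hST : S ⊆ T) :
    0 ≤ Rexp pr r S ∧ Rexp pr r S ≤ Rexp pr r T := by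
  constructor
  · exact Finset.sum_nonneg fun j _ =>
      mul_nonneg (hr j) (Finset.prod_nonneg fun i _ => (hpr i).1)
  · have key : ∀ U : Finset (Fin n), Rexp pr r S ≤ Rexp pr r (S ∪ U) := by
      intro U
      induction U using Finset.induction_on with
      | empty => simp
      | @insert a U' ha ih =>
        rw [Finset.union_insert]
        by_cases h : a ∈ S ∪ U'
        · rwa [Finset.insert_eq_self.2 h]
        · exact le_trans ih (Rexp_le_insert pr r hpr hr hZ _ _ h)
    have := key T
    rwa [Finset.union_eq_right.2 hST] at this
end

section
/- Correctness of the dynamic programming recurrence: suppose all costs c_j are natural numbers, and for i ∈ {1,…,n+1} and b ∈ ℕ define V(b,i) = max{R(S) : S ⊆ {i,…,n}, c(S) ≤ b} (so V(b, n+1) = 0, since only S = ∅ is admissible). Then for every i ∈ {1,…,n} and b ∈ ℕ: if b < c_i then V(b,i) = V(b,i+1), and if b ≥ c_i then V(b,i) = max{ V(b,i+1), π_i·(r_i + V(b − c_i, i+1)) }. -/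
/-- The dynamic-programming value function
`V(b,i) = max{ R(S) : S ⊆ {i,…,n}, c(S) ≤ b }`. Jobs are numbered `1,…,n`, with
job `t` corresponding to the index `x : Fin n` with `x.val + 1 = t`, so
`S ⊆ {i,…,n}` means `∀ x ∈ S, i ≤ x.val + 1`. -/
def Vdp {n : ℕ} (pr r : Fin n → ℝ) (c : Fin n → ℕ) (b : ℕ) (i : ℕ) : ℝ :=
  ((Finset.univ : Finset (Fin n)).powerset.filter
      (fun S => (∀ x ∈ S, i ≤ x.val + 1) ∧ ∑ j ∈ S, c j ≤ b)).sup'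
    ⟨∅, by simp⟩ (Rexp pr r)

lemma Rexp_empty {n : ℕ} (pr r : Fin n → ℝ) : Rexp pr r ∅ = 0 := by
  simp [Rexp]

lemma Rexp_insert {n : ℕ} (pr r : Fin n → ℝ) (k : Fin n) (S : Finset (Fin n))
    (hS : ∀ x ∈ S, k < x) :
    Rexp pr r (insert k S) = pr k * (r k + Rexp pr r S) := by
  have hk : k ∉ S := fun h => lt_irrefl k (hS k h)
  unfold Rexp
  rw [Finset.sum_insert hk]
  have h1 : (insert k S).filter (fun i => i ≤ k) = {k} := by
    ext x
    simp only [Finset.mem_filter, Finset.mem_insert, Finset.mem_singleton]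
    constructor
    · rintro ⟨(rfl | hx), hle⟩
      · rfl
      · exact absurd hle (not_le.2 (hS x hx))
    · rintro rfl; exact ⟨Or.inl rfl, le_refl _⟩
  have h2 : ∀ j ∈ S, (insert k S).filter (fun i => i ≤ j)
      = insert k (S.filter (fun i => i ≤ j)) := by
    intro j hj
    rw [Finset.filter_insert, if_pos (le_of_lt (hS j hj))]
  rw [h1, Finset.prod_singleton,
    Finset.sum_congr rfl (fun j hj => by
      rw [h2 j hj, Finset.prod_insert (fun h => hk (Finset.mem_filter.1 h).1)])]
  rw [mul_add, Finset.mul_sum]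
  congr 1
  · ring
  · exact Finset.sum_congr rfl fun j _ => by ring

lemma empty_mem_filter {n : ℕ} (c : Fin n → ℕ) (b i : ℕ) :
    ∅ ∈ ((Finset.univ : Finset (Fin n)).powerset.filter
      (fun S => (∀ x ∈ S, i ≤ x.val + 1) ∧ ∑ j ∈ S, c j ≤ b)) := by
  simp

/-- Correctness of the DP recurrence: `V(b, n+1) = 0`, and for every job
`i ∈ {1,…,n}` (given as `k : Fin n` with `i = k.val + 1`) and budget `b`:
if `b < c_i` then `V(b,i) = V(b,i+1)`, and if `b ≥ c_i` then
`V(b,i) = max{ V(b,i+1), π_i·(r_i + V(b − c_i, i+1)) }`. -/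
theorem dp_recurrence (n : ℕ) (pr r : Fin n → ℝ) (c : Fin n → ℕ)
    (hpr : ∀ j, 0 ≤ pr j ∧ pr j < 1) (hr : ∀ j, 0 ≤ r j) :
    (∀ b : ℕ, Vdp pr r c b (n + 1) = 0) ∧
    ∀ (k : Fin n) (b : ℕ),
      (b < c k → Vdp pr r c b (k.val + 1) = Vdp pr r c b (k.val + 2)) ∧
      (c k ≤ b → Vdp pr r c b (k.val + 1) =
        max (Vdp pr r c b (k.val + 2))
          (pr k * (r k + Vdp pr r c (b - c k) (k.val + 2)))) := by
  constructor
  · intro b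
    unfold Vdp
    apply le_antisymm
    · apply Finset.sup'_le
      intro S hS
      simp only [Finset.mem_filter] at hS
      have hSe : S = ∅ := Finset.eq_empty_of_forall_notMem fun x hx => by
        have h1 := hS.2.1 x hx
        have h2 := x.isLt
        omega
      simp [hSe, Rexp_empty]
    · exact (Rexp_empty pr r) ▸ Finset.le_sup' (Rexp pr r) (empty_mem_filter c b (n + 1))
  · intro k b
    constructor
    · -- b < c k
      intro hb
      unfold Vdp
      congr 1
      apply Finset.filter_congr
      intro S _
      constructor
      · rintro ⟨h1, h2⟩
        refine ⟨fun x hx => ?_, h2⟩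
        have hxk : x ≠ k := by
          rintro rfl
          have : c x ≤ ∑ j ∈ S, c j := Finset.single_le_sum (fun j _ => Nat.zero_le _) hx
          omega
        have := h1 x hx
        have : k.val ≠ x.val := fun h => hxk (Fin.ext h.symm)
        omega
      · rintro ⟨h1, h2⟩
        exact ⟨fun x hx => by have := h1 x hx; omega, h2⟩
    · -- c k ≤ b
      intro hb
      apply le_antisymm
      · -- V(b,k+1) ≤ max
        apply Finset.sup'_le
        intro S hS
        simp only [Finset.mem_filter] at hS
        obtain ⟨_, h1, h2⟩ := hS
        by_cases hk : k ∈ S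
        · -- use right branch
          refine le_max_of_le_right ?_
          set S' := S.erase k with hS'
          have hgt : ∀ x ∈ S', k < x := by
            intro x hx
            have hx1 := Finset.mem_of_mem_erase hx
            have hne := Finset.ne_of_mem_erase hx
            have := h1 x hx1
            have : k.val < x.val := by
              rcases Nat.lt_or_ge k.val x.val with h | h
              · exact h
              · exfalso; apply hne; apply Fin.ext; omega
            exact this
          have hins : insert k S' = S := Finset.insert_erase hk
          have hcost : ∑ j ∈ S', c j ≤ b - c k := by
            have : c k + ∑ j ∈ S', c j = ∑ j ∈ S, c j := by
              rw [← hins, Finset.sum_insert (Finset.notMem_erase k S)]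
            omega
          have hmem : S' ∈ ((Finset.univ : Finset (Fin n)).powerset.filter
              (fun T => (∀ x ∈ T, k.val + 2 ≤ x.val + 1) ∧ ∑ j ∈ T, c j ≤ b - c k)) := by
            simp only [Finset.mem_filter, Finset.mem_powerset]
            exact ⟨Finset.subset_univ _, fun x hx => by have := hgt x hx; omega, hcost⟩
          have hR : Rexp pr r S = pr k * (r k + Rexp pr r S') := by
            rw [← hins, Rexp_insert pr r k S' hgt]
          rw [hR]
          have hle : Rexp pr r S' ≤ Vdp pr r c (b - c k) (k.val + 2) :=
            Finset.le_sup' (Rexp pr r) hmem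
          have := (hpr k).1
          nlinarith
        · -- use left branch
          refine le_max_of_le_left ?_
          apply Finset.le_sup'
          simp only [Finset.mem_filter, Finset.mem_powerset]
          refine ⟨Finset.subset_univ _, fun x hx => ?_, h2⟩
          have := h1 x hx
          have hne : x ≠ k := fun h => hk (h ▸ hx)
          have : k.val ≠ x.val := fun h => hne (Fin.ext h.symm)
          omega
      · -- max ≤ V(b,k+1)
        apply max_le
        · apply Finset.sup'_le
          intro S hS
          apply Finset.le_sup'
          simp only [Finset.mem_filter, Finset.mem_powerset] at hS ⊢
          exact ⟨hS.1, fun x hx => by have := hS.2.1 x hx; omega, hS.2.2⟩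
        · obtain ⟨S', hS'mem, hS'eq⟩ :=
            Finset.exists_mem_eq_sup'
              (⟨∅, empty_mem_filter c (b - c k) (k.val + 2)⟩ :
                (((Finset.univ : Finset (Fin n)).powerset.filter
                  (fun S => (∀ x ∈ S, k.val + 2 ≤ x.val + 1) ∧
                    ∑ j ∈ S, c j ≤ b - c k))).Nonempty)
              (Rexp pr r)
          simp only [Finset.mem_filter, Finset.mem_powerset] at hS'mem
          obtain ⟨-, h1, h2⟩ := hS'mem
          have hgt : ∀ x ∈ S', k < x := by
            intro x hx
            have := h1 x hx
            have : k.val < x.val := by omega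
            exact this
          have hVeq : Vdp pr r c (b - c k) (k.val + 2) = Rexp pr r S' := hS'eq
          rw [hVeq, ← Rexp_insert pr r k S' hgt]
          apply Finset.le_sup'
          simp only [Finset.mem_filter, Finset.mem_powerset]
          refine ⟨Finset.subset_univ _, fun x hx => ?_, ?_⟩
          · rcases Finset.mem_insert.1 hx with rfl | hx'
            · omega
            · have := h1 x hx'; omega
          · rw [Finset.sum_insert (fun h => lt_irrefl k (hgt k h))]
            omega
end

section
/- Position-based upper bound: for every S ⊆ {1,…,n}, z(S) ≤ Σ_{j∈S} max{0, π_j r_j · Π_j^{(k_j − 1)} − c_j}, where k_j = |{i ∈ S : i ≤ j}| is the position of job j in S, and Π_j^{(m)} denotes the product of the m largest values among π_1,…,π_{j−1} (with Π_j^{(0)} = 1). -/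
lemma list_prod_nonneg (l : List ℝ) (h : ∀ x ∈ l, 0 ≤ x) : 0 ≤ l.prod := by
  induction l with
  | nil => simp
  | cons a l ih =>
    simp only [List.prod_cons]
    exact mul_nonneg (h a (by simp)) (ih fun x hx => h x (by simp [hx]))

lemma prod_le_take_prod (l : List ℝ) (hnn : ∀ x ∈ l, 0 ≤ x)
    (hsort : l.Pairwise (· ≥ ·)) (s : Multiset ℝ) (hs : s ≤ ↑l) :
    s.prod ≤ (l.take (Multiset.card s)).prod := by
  induction l generalizing s with
  | nil =>
    have h0 : s = 0 := Multiset.le_zero.mp (by simpa using hs)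
    simp [h0]
  | cons a l ih =>
    have hnn' : ∀ x ∈ l, 0 ≤ x := fun x hx => hnn x (List.mem_cons_of_mem _ hx)
    by_cases ha : a ∈ s
    · obtain ⟨s', rfl⟩ := Multiset.exists_cons_of_mem ha
      have hs' : s' ≤ ↑l := by
        have : a ::ₘ s' ≤ a ::ₘ ↑l := by simpa using hs
        exact (Multiset.cons_le_cons_iff a).mp this
      have h1 := ih hnn' hsort.of_cons s' hs'
      simpa [Multiset.prod_cons, List.take] using
        mul_le_mul_of_nonneg_left h1 (hnn a (by simp))
    · have hs' : s ≤ ↑l := by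
        have : s ≤ a ::ₘ ↑l := by simpa using hs
        exact Multiset.le_cons_of_notMem ha |>.mp this
      have h1 := ih hnn' hsort.of_cons s hs'
      have hcard : Multiset.card s ≤ l.length := by
        simpa using Multiset.card_le_card hs'
      rcases Nat.eq_zero_or_pos (Multiset.card s) with h0 | hpos
      · have : s = 0 := Multiset.card_eq_zero.mp h0
        simp [this, h0]
      · obtain ⟨k, hk⟩ := Nat.exists_eq_succ_of_ne_zero (Nat.pos_iff_ne_zero.mp hpos)
        rw [hk] at h1 hcard ⊢
        have hklt : k < l.length := hcard
        have htake : l.take (k + 1) = l.take k ++ [l.get ⟨k, hklt⟩] := by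
          rw [List.take_succ]
          congr 1
          simp [List.getElem?_eq_getElem hklt]
        have hmem : l.get ⟨k, hklt⟩ ∈ l := List.get_mem l ⟨k, hklt⟩
        have hle : l.get ⟨k, hklt⟩ ≤ a := List.rel_of_pairwise_cons hsort hmem
        calc s.prod ≤ (l.take (k+1)).prod := h1
          _ = (l.take k).prod * l.get ⟨k, hklt⟩ := by rw [htake, List.prod_append]; simp
          _ ≤ (l.take k).prod * a := by
              apply mul_le_mul_of_nonneg_left hle
              exact list_prod_nonneg _ (fun x hx => hnn' x (List.mem_of_mem_take hx))
          _ = ((a :: l).take (k+1)).prod := by simp [List.take, mul_comm]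




/-- `Π_j^{(m)}`: the product of the `m` largest values among `π_1,…,π_{j−1}`
(the multiset of values `π_i` for `i < j`), with `Π_j^{(0)} = 1`. -/
noncomputable def topProd {n : ℕ} (pr : Fin n → ℝ) (j : Fin n) (m : ℕ) : ℝ :=
  (((((Finset.Iio j).val.map pr).sort (· ≤ ·)).reverse.take m)).prod

/-- Position-based upper bound: for every `S ⊆ {1,…,n}`,
`z(S) ≤ Σ_{j∈S} max{0, π_j r_j · Π_j^{(k_j − 1)} − c_j}`, where
`k_j = |{i ∈ S : i ≤ j}|` is the position of job `j` within `S`. -/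
theorem position_upper_bound (n : ℕ) (pr r c : Fin n → ℝ)
    (hpr : ∀ j, 0 ≤ pr j ∧ pr j < 1) (hr : ∀ j, 0 ≤ r j) (hc : ∀ j, 0 ≤ c j)
    (hZ : ∀ i j : Fin n, i ≤ j →
      pr j * r j / (1 - pr j) ≤ pr i * r i / (1 - pr i))
    (S : Finset (Fin n)) :
    netz pr r c S ≤
      ∑ j ∈ S, max 0
        (pr j * r j * topProd pr j ((S.filter (fun i => i ≤ j)).card - 1) - c j) := by
  unfold netz Rexp cst
  rw [← Finset.sum_sub_distrib]
  apply Finset.sum_le_sum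
  intro j hj
  set T := S.filter (fun i => i < j) with hT
  have hsplit : S.filter (fun i => i ≤ j) = insert j T := by
    ext i
    simp only [Finset.mem_filter, Finset.mem_insert, hT]
    constructor
    · rintro ⟨hi, hle⟩
      rcases lt_or_eq_of_le hle with h | h
      · exact Or.inr ⟨hi, h⟩
      · exact Or.inl h
    · rintro (rfl | ⟨hi, hlt⟩)
      · exact ⟨hj, le_refl _⟩
      · exact ⟨hi, le_of_lt hlt⟩
  have hjT : j ∉ T := by simp [hT]
  have hcard : (S.filter (fun i => i ≤ j)).card - 1 = T.card := by
    rw [hsplit, Finset.card_insert_of_notMem hjT]; omega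
  have hprodsplit : ∏ i ∈ S.filter (fun i => i ≤ j), pr i = pr j * ∏ i ∈ T, pr i := by
    rw [hsplit, Finset.prod_insert hjT]
  set l := (((Finset.Iio j).val.map pr).sort (· ≤ ·)).reverse with hl
  have hlcoe : (↑l : Multiset ℝ) = (Finset.Iio j).val.map pr := by
    rw [hl, Multiset.coe_reverse, Multiset.sort_eq]
  have hkey : ∏ i ∈ T, pr i ≤ topProd pr j T.card := by
    have hTs : (T.val.map pr : Multiset ℝ) ≤ ↑l := by
      rw [hlcoe]
      apply Multiset.map_le_map
      exact Finset.val_le_iff.mpr (fun i hi => by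
        simp only [hT, Finset.mem_filter] at hi
        simpa [Finset.mem_Iio] using hi.2)
    have hnn : ∀ x ∈ l, 0 ≤ x := by
      intro x hx
      have : x ∈ (↑l : Multiset ℝ) := hx
      rw [hlcoe] at this
      obtain ⟨i, _, rfl⟩ := Multiset.mem_map.mp this
      exact (hpr i).1
    have hs0 : (((Finset.Iio j).val.map pr).sort (· ≤ ·)).Pairwise (· ≤ ·) :=
      Multiset.pairwise_sort _ _
    have hsort : l.Pairwise (· ≥ ·) := List.pairwise_reverse.mpr hs0
    have := prod_le_take_prod l hnn hsort (T.val.map pr) hTs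
    rw [Multiset.card_map] at this
    rw [Finset.prod_eq_multiset_prod, topProd]
    exact this
  have h2 : r j * ∏ i ∈ S.filter (fun i => i ≤ j), pr i ≤
      pr j * r j * topProd pr j ((S.filter (fun i => i ≤ j)).card - 1) := by
    rw [hprodsplit, hcard]
    have := mul_le_mul_of_nonneg_left hkey (mul_nonneg (hpr j).1 (hr j))
    linarith [this]
  calc r j * ∏ i ∈ S.filter (fun i => i ≤ j), pr i - c j
      ≤ pr j * r j * topProd pr j ((S.filter (fun i => i ≤ j)).card - 1) - c j := by
        linarith
    _ ≤ _ := le_max_right _ _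
end
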